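/- Assume q is uniformly Lipschitz continuous in (μ,a) with Lipschitz constant L_q, and F, G are bounded by a constant C₀ and uniformly continuous in (μ,a) with modulus of continuity ρ. Then for any L ≥ 0 there exists a modulus of continuity ρ_L, depending only on T, |𝕊|, L_q, C₀, ρ and L, such that for any t ∈ 𝕋, x⃗ ∈ 𝕊^N₀, μ ∈ 𝒫₀(𝕊), α, α̃ ∈ 𝒜^L_state and i ∈ {1,…,N}: |J_i(t,x⃗,(α,α̃)_i) − J(t,μ,α;x_i,α̃)| + |v^{N,L}_i(t,x⃗,α) − v(μ^α;t,x_i)| ≤ ρ_L(θ_N), where θ_N := W₁(μ^N_{x⃗},μ) + 1/√N. -/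

import Mathlib

/-!
Statement 3 (Theorem 3.3, convergence of empirical measures for the `N`-player game
with homogeneous controls).

Finite-state mean field game; probability measures on the finite state space `S`
are encoded as functions `S → ℝ` (`IsProb`), with `W₁(μ,ν) = ∑_x |μ x − ν x|`.
Controls may depend on the current measure: `α : ℕ → S → (S → ℝ) → A`, and
`𝒜^L_state` is the class of such controls that are `L`-Lipschitz in the measure.
-/

open Finset

namespace MFGSetValue

variable {S A : Type*} [Fintype S] [DecidableEq S]

/-- A probability vector on the finite state space `S`. -/
def IsProb (μ : S → ℝ) : Prop := (∀ x, 0 ≤ μ x) ∧ ∑ x, μ x = 1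

/-- `W₁` distance (total-variation type) between two measures on `S`. -/
noncomputable def W1 (μ ν : S → ℝ) : ℝ := ∑ x, |μ x - ν x|

section Metric
variable [PseudoMetricSpace A]

/-- `α ∈ 𝒜^L_state`: measure-dependent controls, `L`-Lipschitz in the measure. -/
def LipCtrl (L : ℝ) (α : ℕ → S → (S → ℝ) → A) : Prop :=
  ∀ s x μ ν, dist (α s x μ) (α s x ν) ≤ L * W1 μ ν

end Metric

/-- The mean-field measure flow `μ^α` for a measure-dependent control `α`:
`μ^α_t = μ`, `μ^α_{s+1}(y) = ∑_x μ^α_s(x) q(s,x,μ^α_s,α(s,x,μ^α_s);y)`. -/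
noncomputable def flowM (q : ℕ → S → (S → ℝ) → A → S → ℝ)
    (α : ℕ → S → (S → ℝ) → A) (t : ℕ) (μ : S → ℝ) : ℕ → S → ℝ
  | 0 => μ
  | s + 1 =>
    if s + 1 ≤ t then μ
    else fun y => ∑ x, flowM q α t μ s x *
      q s x (flowM q α t μ s) (α s x (flowM q α t μ s)) y

/-- The law at each time of the Markov chain `ℙ^{μ^α; t, x₀, α̃}` started from `x₀`
at time `t`, with transitions `q(s,·,ν_s,α̃(s,·,ν_s);·)` against the flow `ν`. -/
noncomputable def chainM (q : ℕ → S → (S → ℝ) → A → S → ℝ) (ν : ℕ → S → ℝ)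
    (αt : ℕ → S → (S → ℝ) → A) (t : ℕ) (x₀ : S) : ℕ → S → ℝ
  | 0 => fun x => if x = x₀ then 1 else 0
  | s + 1 =>
    if s + 1 ≤ t then fun x => if x = x₀ then 1 else 0
    else fun y => ∑ x, chainM q ν αt t x₀ s x * q s x (ν s) (αt s x (ν s)) y

/-- The empirical measure `μ^N_{x⃗}` of a configuration `x⃗ ∈ 𝕊^N`. -/
noncomputable def emp {N : ℕ} (xv : Fin N → S) : S → ℝ :=
  fun x => (∑ i, if xv i = x then (1 : ℝ) else 0) / N

/-- The joint law `ℙ^{t,x⃗,α⃗}` of the `N`-player state process: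
`X⃗_t = x⃗` and independent transitions `q(s, x_i, μ^N_s, α^i(s,x_i,μ^N_s); ·)`. -/
noncomputable def jointFlow (q : ℕ → S → (S → ℝ) → A → S → ℝ) {N : ℕ}
    (αv : Fin N → ℕ → S → (S → ℝ) → A) (t : ℕ) (xv : Fin N → S) :
    ℕ → (Fin N → S) → ℝ
  | 0 => fun z => if z = xv then 1 else 0
  | s + 1 =>
    if s + 1 ≤ t then fun z => if z = xv then 1 else 0
    else fun z => ∑ w : Fin N → S, jointFlow q αv t xv s w *
      ∏ i, q s (w i) (emp w) (αv i s (w i) (emp w)) (z i)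

/-- The `N`-tuple `(α, α̃)_i`: player `i` uses `α̃`, all others use `α`. -/
def replaceI {N : ℕ} (α αt : ℕ → S → (S → ℝ) → A) (i : Fin N) :
    Fin N → ℕ → S → (S → ℝ) → A :=
  fun j => if j = i then αt else α


/-- The mean field game cost `J(t,μ,α;x₀,α̃) = E[G(X_T,μ^α_T) + ∑_{s=t}^{T-1} F(…)]`
for measure-dependent controls, against the flow `ν`. -/
noncomputable def costM (q : ℕ → S → (S → ℝ) → A → S → ℝ)
    (F : ℕ → S → (S → ℝ) → A → ℝ) (G : S → (S → ℝ) → ℝ) (T : ℕ)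
    (ν : ℕ → S → ℝ) (t : ℕ) (x₀ : S) (αt : ℕ → S → (S → ℝ) → A) : ℝ :=
  (∑ x, chainM q ν αt t x₀ T x * G x (ν T)) +
    ∑ s ∈ Finset.Ico t T, ∑ x, chainM q ν αt t x₀ s x * F s x (ν s) (αt s x (ν s))

/-- The value `v(ν; t, x₀) = inf_{α̃} J(ν; t, x₀, α̃)` over admissible controls. -/
noncomputable def valueM (q : ℕ → S → (S → ℝ) → A → S → ℝ)
    (F : ℕ → S → (S → ℝ) → A → ℝ) (G : S → (S → ℝ) → ℝ) (T : ℕ)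
    (ν : ℕ → S → ℝ) (t : ℕ) (x₀ : S) : ℝ :=
  sInf { r : ℝ | ∃ αt : ℕ → S → (S → ℝ) → A, r = costM q F G T ν t x₀ αt }

/-- The cost `J_i(t,x⃗,α⃗)` of player `i` in the `N`-player game. -/
noncomputable def Ji (q : ℕ → S → (S → ℝ) → A → S → ℝ)
    (F : ℕ → S → (S → ℝ) → A → ℝ) (G : S → (S → ℝ) → ℝ) (T : ℕ) {N : ℕ}
    (t : ℕ) (xv : Fin N → S) (αv : Fin N → ℕ → S → (S → ℝ) → A) (i : Fin N) : ℝ :=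
  (∑ w : Fin N → S, jointFlow q αv t xv T w * G (w i) (emp w)) +
    ∑ s ∈ Finset.Ico t T, ∑ w : Fin N → S,
      jointFlow q αv t xv s w * F s (w i) (emp w) (αv i s (w i) (emp w))

section Metric
variable [PseudoMetricSpace A]

/-- `v^{N,L}_i(t,x⃗,α) = inf_{α̃ ∈ 𝒜^L_state} J_i(t,x⃗,(α,α̃)_i)`. -/
noncomputable def vNi (q : ℕ → S → (S → ℝ) → A → S → ℝ)
    (F : ℕ → S → (S → ℝ) → A → ℝ) (G : S → (S → ℝ) → ℝ) (T : ℕ) (L : ℝ) {N : ℕ}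
    (t : ℕ) (xv : Fin N → S) (α : ℕ → S → (S → ℝ) → A) (i : Fin N) : ℝ :=
  sInf { r : ℝ | ∃ αt : ℕ → S → (S → ℝ) → A,
    LipCtrl L αt ∧ r = Ji q F G T t xv (replaceI α αt i) i }

end Metric

end MFGSetValue

open MFGSetValue

set_option linter.unusedSectionVars false
namespace MFGAux
open MFGSetValue

variable {S A : Type*} [Fintype S] [DecidableEq S]

lemma W1_nonneg (μ ν : S → ℝ) : 0 ≤ W1 μ ν := Finset.sum_nonneg fun _ _ => abs_nonneg _

lemma W1_triangle (μ ν ξ : S → ℝ) : W1 μ ξ ≤ W1 μ ν + W1 ν ξ := by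
  rw [W1, W1, W1, ← Finset.sum_add_distrib]
  exact Finset.sum_le_sum fun x _ => abs_sub_le _ _ _

lemma sum_prod_pi {N : ℕ} (f : Fin N → S → ℝ) :
    ∑ z : Fin N → S, ∏ j, f j (z j) = ∏ j, ∑ x, f j x := by
  rw [Finset.prod_univ_sum, Fintype.piFinset_univ]

lemma isProb_emp {N : ℕ} (hN : 0 < N) (w : Fin N → S) : IsProb (emp w) := by
  constructor
  · intro x; unfold emp
    have : (0:ℝ) ≤ ∑ i, if w i = x then (1:ℝ) else 0 :=
      Finset.sum_nonneg fun _ _ => by positivity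
    positivity
  · unfold emp
    rw [← Finset.sum_div, Finset.sum_comm]
    have : ∀ i : Fin N, (∑ x, if w i = x then (1:ℝ) else 0) = 1 := by
      intro i; rw [Finset.sum_ite_eq]; simp
    simp only [this]
    rw [Finset.sum_const, Finset.card_univ, Fintype.card_fin, nsmul_eq_mul, mul_one]
    field_simp

/-- grouping: `∑_w p w * f (w i) = ∑_x (∑_w p w * 1_{w i = x}) * f x`. -/
lemma group_by_coord {N : ℕ} (p : (Fin N → S) → ℝ) (i : Fin N) (f : S → ℝ) :
    ∑ w : Fin N → S, p w * f (w i)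
      = ∑ x, (∑ w : Fin N → S, p w * if w i = x then 1 else 0) * f x := by
  have : ∀ x : S, (∑ w : Fin N → S, p w * if w i = x then 1 else 0) * f x
      = ∑ w : Fin N → S, p w * if w i = x then f x else 0 := by
    intro x; rw [Finset.sum_mul]
    refine Finset.sum_congr rfl fun w _ => ?_
    by_cases h : w i = x <;> simp [h]
  simp only [this]
  rw [Finset.sum_comm]
  refine Finset.sum_congr rfl fun w _ => ?_
  rw [← Finset.mul_sum, Finset.sum_ite_eq]
  simp


lemma sum_prod_single {N : ℕ} (p : Fin N → S → ℝ) (hp1 : ∀ j, ∑ y, p j y = 1)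
    (i : Fin N) (f : S → ℝ) :
    ∑ z : Fin N → S, (∏ j, p j (z j)) * f (z i) = ∑ y, p i y * f y := by
  have key : ∀ z : Fin N → S, (∏ j, p j (z j)) * f (z i)
      = ∏ j, (p j (z j) * if j = i then f (z j) else 1) := by
    intro z
    rw [Finset.prod_mul_distrib, Finset.prod_ite_eq' Finset.univ i (fun j => f (z j))]
    simp
  simp only [key]
  rw [sum_prod_pi (fun j y => p j y * if j = i then f y else 1)]
  have key2 : ∀ j : Fin N, (∑ y, p j y * if j = i then f y else 1)
      = if j = i then ∑ y, p i y * f y else 1 := by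
    intro j
    by_cases h : j = i
    · subst h; simp
    · simp [h, hp1 j]
  simp only [key2]
  rw [Finset.prod_ite_eq' Finset.univ i]
  simp

lemma sum_prod_pair {N : ℕ} (p : Fin N → S → ℝ) (hp1 : ∀ j, ∑ y, p j y = 1)
    {i j : Fin N} (hij : i ≠ j) (f g : S → ℝ) :
    ∑ z : Fin N → S, (∏ k, p k (z k)) * (f (z i) * g (z j))
      = (∑ y, p i y * f y) * (∑ y, p j y * g y) := by
  have key : ∀ z : Fin N → S, (∏ k, p k (z k)) * (f (z i) * g (z j))
      = ∏ k, (p k (z k) * (if k = i then f (z k) else 1) * (if k = j then g (z k) else 1)) := by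
    intro z
    rw [Finset.prod_mul_distrib, Finset.prod_mul_distrib,
      Finset.prod_ite_eq' Finset.univ i (fun k => f (z k)),
      Finset.prod_ite_eq' Finset.univ j (fun k => g (z k))]
    simp [mul_assoc]
  simp only [key]
  rw [sum_prod_pi (fun k y => p k y * (if k = i then f y else 1) * (if k = j then g y else 1))]
  have key2 : ∀ k : Fin N, (∑ y, p k y * (if k = i then f y else 1) * (if k = j then g y else 1))
      = (if k = i then ∑ y, p i y * f y else 1) * (if k = j then ∑ y, p j y * g y else 1) := by
    intro k
    by_cases h1 : k = i
    · subst h1; simp [hij]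
    · by_cases h2 : k = j
      · subst h2; simp [h1]
      · simp [h1, h2, hp1 k]
  simp only [key2]
  rw [Finset.prod_mul_distrib, Finset.prod_ite_eq' Finset.univ i,
    Finset.prod_ite_eq' Finset.univ j]
  simp


lemma expectation_abs_le_sqrt {ι : Type*} [Fintype ι] (p g : ι → ℝ)
    (hp0 : ∀ z, 0 ≤ p z) (hp1 : ∑ z, p z = 1) :
    ∑ z, p z * |g z| ≤ Real.sqrt (∑ z, p z * g z ^ 2) := by
  have hL0 : 0 ≤ ∑ z, p z * |g z| :=
    Finset.sum_nonneg fun z _ => mul_nonneg (hp0 z) (abs_nonneg _)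
  have hR0 : 0 ≤ ∑ z, p z * g z ^ 2 :=
    Finset.sum_nonneg fun z _ => mul_nonneg (hp0 z) (sq_nonneg _)
  rw [show (∑ z, p z * |g z|) = ∑ z, Real.sqrt (p z) * (Real.sqrt (p z) * |g z|) by
    refine Finset.sum_congr rfl fun z _ => ?_
    rw [← mul_assoc, Real.mul_self_sqrt (hp0 z)]]
  refine (Real.le_sqrt (Finset.sum_nonneg fun z _ =>
    mul_nonneg (Real.sqrt_nonneg _) (mul_nonneg (Real.sqrt_nonneg _) (abs_nonneg _))) hR0).mpr ?_
  calc (∑ z, Real.sqrt (p z) * (Real.sqrt (p z) * |g z|)) ^ 2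
      ≤ (∑ z, Real.sqrt (p z) ^ 2) * ∑ z, (Real.sqrt (p z) * |g z|) ^ 2 :=
        Finset.sum_mul_sq_le_sq_mul_sq _ _ _
    _ = ∑ z, p z * g z ^ 2 := by
        have e1 : ∀ z : ι, Real.sqrt (p z) ^ 2 = p z := fun z => Real.sq_sqrt (hp0 z)
        have e2 : ∀ z : ι, (Real.sqrt (p z) * |g z|) ^ 2 = p z * g z ^ 2 := by
          intro z; rw [mul_pow, Real.sq_sqrt (hp0 z), sq_abs]
        simp only [e1, e2, hp1, one_mul]

lemma var_bound {N : ℕ} (p : Fin N → S → ℝ) (hp0 : ∀ j y, 0 ≤ p j y)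
    (hp1 : ∀ j, ∑ y, p j y = 1) (x : S) :
    ∑ z : Fin N → S, (∏ j, p j (z j)) *
      (∑ j, ((if z j = x then (1:ℝ) else 0) - p j x)) ^ 2 ≤ N / 4 := by
  set Y : Fin N → S → ℝ := fun j y => (if y = x then (1:ℝ) else 0) - p j x with hY
  have hsq : ∀ z : Fin N → S, (∑ j, ((if z j = x then (1:ℝ) else 0) - p j x)) ^ 2
      = ∑ j, ∑ k, Y j (z j) * Y k (z k) := by
    intro z; rw [sq, Finset.sum_mul_sum]
  have swap1 : ∑ z : Fin N → S, (∏ j, p j (z j)) *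
        (∑ j, ((if z j = x then (1:ℝ) else 0) - p j x)) ^ 2
      = ∑ j, ∑ k, ∑ z : Fin N → S, (∏ m, p m (z m)) * (Y j (z j) * Y k (z k)) := by
    simp only [hsq, Finset.mul_sum]
    rw [Finset.sum_comm]
    exact Finset.sum_congr rfl fun j _ => Finset.sum_comm
  rw [swap1]
  have hmean : ∀ j : Fin N, (∑ y, p j y * Y j y) = 0 := by
    intro j
    simp only [hY, mul_sub, Finset.sum_sub_distrib, mul_ite, mul_one, mul_zero,
      Finset.sum_ite_eq', Finset.mem_univ, if_true, ← Finset.sum_mul, hp1 j, one_mul]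
    ring
  have hcross : ∀ j k : Fin N, j ≠ k →
      (∑ z : Fin N → S, (∏ m, p m (z m)) * (Y j (z j) * Y k (z k))) = 0 := by
    intro j k hjk
    rw [sum_prod_pair p hp1 hjk, hmean j, zero_mul]
  have hdiag : ∀ j : Fin N,
      (∑ z : Fin N → S, (∏ m, p m (z m)) * (Y j (z j) * Y j (z j))) ≤ 1 / 4 := by
    intro j
    have : ∀ z : Fin N → S, (∏ m, p m (z m)) * (Y j (z j) * Y j (z j))
        = (∏ m, p m (z m)) * ((fun y => Y j y * Y j y) (z j)) := fun z => rfl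
    simp only [this]
    rw [sum_prod_single p hp1 j (fun y => Y j y * Y j y)]
    have hpt : ∀ y, p j y * (Y j y * Y j y)
        = p j y * (if y = x then (1:ℝ) else 0) * (1 - 2 * p j x) + p j y * (p j x) ^ 2 := by
      intro y
      simp only [hY]
      by_cases h : y = x
      · simp only [if_pos h]; ring
      · simp only [if_neg h]; ring
    simp only [hpt]
    rw [Finset.sum_add_distrib, ← Finset.sum_mul, ← Finset.sum_mul]
    simp only [mul_ite, mul_one, mul_zero, Finset.sum_ite_eq', Finset.mem_univ, if_true, hp1 j,
      one_mul]
    nlinarith [sq_nonneg (p j x - 1/2)]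
  calc ∑ j, ∑ k, ∑ z : Fin N → S, (∏ m, p m (z m)) * (Y j (z j) * Y k (z k))
      ≤ ∑ j : Fin N, (1:ℝ) / 4 := by
        refine Finset.sum_le_sum fun j _ => ?_
        rw [Finset.sum_eq_single_of_mem j (Finset.mem_univ j)
          (fun k _ hk => hcross j k (Ne.symm hk))]
        exact hdiag j
    _ = N / 4 := by simp [Finset.sum_const]; ring


lemma sqrt_N_pos {N : ℕ} (hN : 0 < N) : 0 < Real.sqrt N := by
  apply Real.sqrt_pos.mpr; exact_mod_cast hN

lemma concentration {N : ℕ} (hN : 0 < N) (p : Fin N → S → ℝ) (hp0 : ∀ j y, 0 ≤ p j y)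
    (hp1 : ∀ j, ∑ y, p j y = 1) :
    ∑ z : Fin N → S, (∏ j, p j (z j)) * W1 (emp z) (fun y => (∑ j, p j y) / N)
      ≤ (Fintype.card S : ℝ) / (2 * Real.sqrt N) := by
  have hprob0 : ∀ z : Fin N → S, 0 ≤ ∏ j, p j (z j) :=
    fun z => Finset.prod_nonneg fun j _ => hp0 j (z j)
  have hprob1 : ∑ z : Fin N → S, ∏ j, p j (z j) = 1 := by
    rw [sum_prod_pi p]; simp [hp1]
  have hW : ∀ z : Fin N → S, W1 (emp z) (fun y => (∑ j, p j y) / N)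
      = ∑ x, |∑ j, ((if z j = x then (1:ℝ) else 0) - p j x)| / N := by
    intro z
    refine Finset.sum_congr rfl fun x _ => ?_
    rw [emp, div_sub_div_same, Finset.sum_sub_distrib, abs_div, Nat.abs_cast]
  calc ∑ z : Fin N → S, (∏ j, p j (z j)) * W1 (emp z) (fun y => (∑ j, p j y) / N)
      = ∑ x, (1 / (N:ℝ)) * ∑ z : Fin N → S, (∏ j, p j (z j)) *
          |∑ j, ((if z j = x then (1:ℝ) else 0) - p j x)| := by
        simp only [hW, Finset.mul_sum]
        rw [Finset.sum_comm]
        refine Finset.sum_congr rfl fun x _ => ?_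
        exact Finset.sum_congr rfl fun z _ => by ring
    _ ≤ ∑ x : S, (1 / (N:ℝ)) * (Real.sqrt N / 2) := by
        refine Finset.sum_le_sum fun x _ => ?_
        refine mul_le_mul_of_nonneg_left ?_ (by positivity)
        calc ∑ z : Fin N → S, (∏ j, p j (z j)) *
              |∑ j, ((if z j = x then (1:ℝ) else 0) - p j x)|
            ≤ Real.sqrt (∑ z : Fin N → S, (∏ j, p j (z j)) *
                (∑ j, ((if z j = x then (1:ℝ) else 0) - p j x)) ^ 2) :=
              expectation_abs_le_sqrt _ _ hprob0 hprob1
          _ ≤ Real.sqrt ((N:ℝ) / 4) := Real.sqrt_le_sqrt (var_bound p hp0 hp1 x)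
          _ = Real.sqrt N / 2 := by
              rw [show ((N:ℝ)/4) = (N:ℝ) * (1/2)^2 by ring, Real.sqrt_mul (by positivity),
                Real.sqrt_sq (by norm_num)]
              ring
    _ = (Fintype.card S : ℝ) / (2 * Real.sqrt N) := by
        rw [Finset.sum_const, Finset.card_univ, nsmul_eq_mul]
        have hs := sqrt_N_pos hN
        have h2 : Real.sqrt N * Real.sqrt N = (N:ℝ) := Real.mul_self_sqrt (by positivity)
        have hN0 : (0:ℝ) < N := by exact_mod_cast hN
        field_simp
        nlinarith [hs]

section Flows
variable {q : ℕ → S → (S → ℝ) → A → S → ℝ}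

lemma flowM_zero (α : ℕ → S → (S → ℝ) → A) (t : ℕ) (μ : S → ℝ) : flowM q α t μ 0 = μ := rfl

lemma flowM_of_le (α : ℕ → S → (S → ℝ) → A) (t : ℕ) (μ : S → ℝ) {s : ℕ} (hs : s ≤ t) :
    flowM q α t μ s = μ := by
  cases s with
  | zero => rfl
  | succ n => rw [flowM, if_pos hs]

lemma flowM_succ (α : ℕ → S → (S → ℝ) → A) (t : ℕ) (μ : S → ℝ) {s : ℕ} (hs : t ≤ s) :
    flowM q α t μ (s + 1) = fun y => ∑ x, flowM q α t μ s x *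
      q s x (flowM q α t μ s) (α s x (flowM q α t μ s)) y := by
  rw [flowM, if_neg (by omega)]

lemma flowM_isProb (hq0 : ∀ s x μ a y, IsProb μ → 0 ≤ q s x μ a y)
    (hq1 : ∀ s x μ a, IsProb μ → ∑ y, q s x μ a y = 1)
    (α : ℕ → S → (S → ℝ) → A) (t : ℕ) (μ : S → ℝ) (hμ : IsProb μ) (s : ℕ) :
    IsProb (flowM q α t μ s) := by
  induction s with
  | zero => exact hμ
  | succ n ih =>
    by_cases h : n + 1 ≤ t
    · rw [flowM_of_le α t μ h]; exact hμ
    · rw [flowM_succ α t μ (by omega)]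
      constructor
      · intro y
        exact Finset.sum_nonneg fun x _ => mul_nonneg (ih.1 x) (hq0 _ _ _ _ _ ih)
      · rw [Finset.sum_comm]
        calc ∑ x, ∑ y, flowM q α t μ n x * q n x (flowM q α t μ n) (α n x (flowM q α t μ n)) y
            = ∑ x, flowM q α t μ n x := by
              refine Finset.sum_congr rfl fun x _ => ?_
              rw [← Finset.mul_sum, hq1 _ _ _ _ ih, mul_one]
          _ = 1 := ih.2

lemma chainM_of_le (ν : ℕ → S → ℝ) (αt : ℕ → S → (S → ℝ) → A) (t : ℕ) (x₀ : S) {s : ℕ}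
    (hs : s ≤ t) : chainM q ν αt t x₀ s = fun x => if x = x₀ then 1 else 0 := by
  cases s with
  | zero => rfl
  | succ n => rw [chainM, if_pos hs]

lemma chainM_succ (ν : ℕ → S → ℝ) (αt : ℕ → S → (S → ℝ) → A) (t : ℕ) (x₀ : S) {s : ℕ}
    (hs : t ≤ s) : chainM q ν αt t x₀ (s + 1)
      = fun y => ∑ x, chainM q ν αt t x₀ s x * q s x (ν s) (αt s x (ν s)) y := by
  rw [chainM, if_neg (by omega)]

lemma isProb_delta (x₀ : S) : IsProb (fun x => if x = x₀ then (1:ℝ) else 0) := by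
  constructor
  · intro x; positivity
  · rw [Finset.sum_ite_eq']; simp

lemma chainM_isProb (hq0 : ∀ s x μ a y, IsProb μ → 0 ≤ q s x μ a y)
    (hq1 : ∀ s x μ a, IsProb μ → ∑ y, q s x μ a y = 1)
    {ν : ℕ → S → ℝ} (hν : ∀ s, IsProb (ν s)) (αt : ℕ → S → (S → ℝ) → A) (t : ℕ) (x₀ : S)
    (s : ℕ) : IsProb (chainM q ν αt t x₀ s) := by
  induction s with
  | zero => exact isProb_delta x₀
  | succ n ih =>
    by_cases h : n + 1 ≤ t
    · rw [chainM_of_le ν αt t x₀ h]; exact isProb_delta x₀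
    · rw [chainM_succ ν αt t x₀ (by omega)]
      constructor
      · intro y
        exact Finset.sum_nonneg fun x _ => mul_nonneg (ih.1 x) (hq0 _ _ _ _ _ (hν n))
      · rw [Finset.sum_comm]
        calc ∑ x, ∑ y, chainM q ν αt t x₀ n x * q n x (ν n) (αt n x (ν n)) y
            = ∑ x, chainM q ν αt t x₀ n x := by
              refine Finset.sum_congr rfl fun x _ => ?_
              rw [← Finset.mul_sum, hq1 _ _ _ _ (hν n), mul_one]
          _ = 1 := ih.2

lemma jointFlow_of_le {N : ℕ} (αv : Fin N → ℕ → S → (S → ℝ) → A) (t : ℕ) (xv : Fin N → S)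
    {s : ℕ} (hs : s ≤ t) :
    jointFlow q αv t xv s = fun z => if z = xv then 1 else 0 := by
  cases s with
  | zero => rfl
  | succ n => rw [jointFlow, if_pos hs]

lemma jointFlow_succ {N : ℕ} (αv : Fin N → ℕ → S → (S → ℝ) → A) (t : ℕ) (xv : Fin N → S)
    {s : ℕ} (hs : t ≤ s) :
    jointFlow q αv t xv (s + 1) = fun z => ∑ w : Fin N → S, jointFlow q αv t xv s w *
      ∏ i, q s (w i) (emp w) (αv i s (w i) (emp w)) (z i) := by
  rw [jointFlow, if_neg (by omega)]

lemma isProb_delta' {N : ℕ} (xv : Fin N → S) :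
    (∀ z : Fin N → S, 0 ≤ (if z = xv then (1:ℝ) else 0)) ∧
      ∑ z : Fin N → S, (if z = xv then (1:ℝ) else 0) = 1 := by
  constructor
  · intro z; positivity
  · rw [Finset.sum_ite_eq']; simp

lemma jointFlow_isProb (hq0 : ∀ s x μ a y, IsProb μ → 0 ≤ q s x μ a y)
    (hq1 : ∀ s x μ a, IsProb μ → ∑ y, q s x μ a y = 1)
    {N : ℕ} (hN : 0 < N) (αv : Fin N → ℕ → S → (S → ℝ) → A) (t : ℕ) (xv : Fin N → S)
    (s : ℕ) :
    (∀ z, 0 ≤ jointFlow q αv t xv s z) ∧ ∑ z : Fin N → S, jointFlow q αv t xv s z = 1 := by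
  induction s with
  | zero => exact isProb_delta' xv
  | succ n ih =>
    by_cases h : n + 1 ≤ t
    · rw [jointFlow_of_le αv t xv h]; exact isProb_delta' xv
    · rw [jointFlow_succ αv t xv (by omega)]
      constructor
      · intro z
        refine Finset.sum_nonneg fun w _ => mul_nonneg (ih.1 w) ?_
        exact Finset.prod_nonneg fun j _ => hq0 _ _ _ _ _ (isProb_emp hN w)
      · rw [Finset.sum_comm]
        calc ∑ w : Fin N → S, ∑ z : Fin N → S, jointFlow q αv t xv n w *
              ∏ i, q n (w i) (emp w) (αv i n (w i) (emp w)) (z i)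
            = ∑ w : Fin N → S, jointFlow q αv t xv n w := by
              refine Finset.sum_congr rfl fun w _ => ?_
              rw [← Finset.mul_sum,
                sum_prod_pi (fun i y => q n (w i) (emp w) (αv i n (w i) (emp w)) y)]
              rw [Finset.prod_congr rfl fun i _ => hq1 _ _ _ _ (isProb_emp hN w)]
              simp
          _ = 1 := ih.2

end Flows

lemma kernel_diff {ι : Type*} [Fintype ι] (p p' : ι → ℝ) (k k' : ι → S → ℝ)
    (hk0 : ∀ x y, 0 ≤ k x y) (hk1 : ∀ x, ∑ y, k x y = 1) (hp'0 : ∀ x, 0 ≤ p' x) :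
    ∑ y, |(∑ x, p x * k x y) - ∑ x, p' x * k' x y|
      ≤ (∑ x, |p x - p' x|) + ∑ x, p' x * ∑ y, |k x y - k' x y| := by
  calc ∑ y, |(∑ x, p x * k x y) - ∑ x, p' x * k' x y|
      ≤ ∑ y, ∑ x, (|p x - p' x| * k x y + p' x * |k x y - k' x y|) := by
        refine Finset.sum_le_sum fun y _ => ?_
        rw [← Finset.sum_sub_distrib]
        refine (Finset.abs_sum_le_sum_abs _ _).trans ?_
        refine Finset.sum_le_sum fun x _ => ?_
        have : p x * k x y - p' x * k' x y
            = (p x - p' x) * k x y + p' x * (k x y - k' x y) := by ring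
        rw [this]
        refine (abs_add_le _ _).trans ?_
        gcongr
        · rw [abs_mul, abs_of_nonneg (hk0 x y)]
        · rw [abs_mul, abs_of_nonneg (hp'0 x)]
    _ = (∑ x, |p x - p' x|) + ∑ x, p' x * ∑ y, |k x y - k' x y| := by
        rw [Finset.sum_comm]
        have : ∀ x : ι, ∑ y, (|p x - p' x| * k x y + p' x * |k x y - k' x y|)
            = |p x - p' x| + p' x * ∑ y, |k x y - k' x y| := by
          intro x
          rw [Finset.sum_add_distrib, ← Finset.mul_sum, hk1 x, mul_one, ← Finset.mul_sum]
        simp only [this]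
        rw [Finset.sum_add_distrib]


lemma emp_avg {N : ℕ} (hN : 0 < N) (w : Fin N → S) (k : S → ℝ) :
    ∑ x, emp w x * k x = (∑ j, k (w j)) / N := by
  have h1 : ∀ x, emp w x * k x = (∑ j, if w j = x then k x else 0) / N := by
    intro x; unfold emp
    rw [div_mul_eq_mul_div, Finset.sum_mul]
    congr 1
    refine Finset.sum_congr rfl fun j _ => ?_
    by_cases h : w j = x <;> simp [h]
  simp only [h1]
  rw [← Finset.sum_div, Finset.sum_comm]
  congr 1
  refine Finset.sum_congr rfl fun j _ => ?_
  rw [Finset.sum_ite_eq]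
  simp

section Main
variable [PseudoMetricSpace A]
variable {q : ℕ → S → (S → ℝ) → A → S → ℝ} {Lq L : ℝ}

lemma q_tv_diff
    (hqLip : ∀ s x μ ν a b y, IsProb μ → IsProb ν →
      |q s x μ a y - q s x ν b y| ≤ Lq * (W1 μ ν + dist a b))
    {s : ℕ} {x : S} {μ' ν' : S → ℝ} {a b : A} (hμ : IsProb μ') (hν : IsProb ν')
    (hab : dist a b ≤ L * W1 μ' ν') :
    ∑ y, |q s x μ' a y - q s x ν' b y|
      ≤ (Fintype.card S : ℝ) * max Lq 0 * (1 + L) * W1 μ' ν' := by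
  have hW := W1_nonneg μ' ν'
  calc ∑ y, |q s x μ' a y - q s x ν' b y|
      ≤ ∑ _y : S, max Lq 0 * (1 + L) * W1 μ' ν' := by
        refine Finset.sum_le_sum fun y _ => ?_
        refine (hqLip s x μ' ν' a b y hμ hν).trans ?_
        have h1 : Lq * (W1 μ' ν' + dist a b) ≤ max Lq 0 * (W1 μ' ν' + dist a b) := by
          have : 0 ≤ W1 μ' ν' + dist a b := by positivity
          exact mul_le_mul_of_nonneg_right (le_max_left _ _) this
        refine h1.trans ?_
        have h2 : W1 μ' ν' + dist a b ≤ (1 + L) * W1 μ' ν' := by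
          have := hab; nlinarith
        calc max Lq 0 * (W1 μ' ν' + dist a b) ≤ max Lq 0 * ((1 + L) * W1 μ' ν') :=
              mul_le_mul_of_nonneg_left h2 (le_max_right _ _)
          _ = max Lq 0 * (1 + L) * W1 μ' ν' := by ring
    _ = (Fintype.card S : ℝ) * max Lq 0 * (1 + L) * W1 μ' ν' := by
        rw [Finset.sum_const, Finset.card_univ, nsmul_eq_mul]; ring

lemma m_step
    (hq01 : ∀ s x μ a y, IsProb μ → 0 < q s x μ a y ∧ q s x μ a y < 1)
    (hq1 : ∀ s x μ a, IsProb μ → ∑ y, q s x μ a y = 1)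
    (hqLip : ∀ s x μ ν a b y, IsProb μ → IsProb ν →
      |q s x μ a y - q s x ν b y| ≤ Lq * (W1 μ ν + dist a b))
    {N : ℕ} (hN : 0 < N) (t : ℕ) (xv : Fin N → S) {μ : S → ℝ} (hμ : IsProb μ)
    (α αt : ℕ → S → (S → ℝ) → A) (hα : LipCtrl L α) (hαt : LipCtrl L αt) (hL : 0 ≤ L)
    (i : Fin N) {s : ℕ} (hs : t ≤ s) :
    (∑ z : Fin N → S, jointFlow q (replaceI α αt i) t xv (s+1) z *
        W1 (emp z) (flowM q α t μ (s+1)))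
      ≤ (1 + (Fintype.card S : ℝ) * max Lq 0 * (1+L)) *
          (∑ w : Fin N → S, jointFlow q (replaceI α αt i) t xv s w *
            W1 (emp w) (flowM q α t μ s))
        + ((Fintype.card S : ℝ)/2 + 2) / Real.sqrt N := by
  have hq0 : ∀ s x μ a y, IsProb μ → 0 ≤ q s x μ a y := fun s x μ a y h => (hq01 s x μ a y h).1.le
  set c1 : ℝ := (Fintype.card S : ℝ) * max Lq 0 * (1+L) with hc1
  have hc1nn : 0 ≤ c1 := by positivity
  set ν : ℕ → S → ℝ := flowM q α t μ with hν
  have hνP : ∀ r, IsProb (ν r) := flowM_isProb hq0 hq1 α t μ hμ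
  set αv := replaceI α αt i with hαv
  set P := jointFlow q αv t xv s with hP
  have hPprob := jointFlow_isProb hq0 hq1 hN αv t xv s
  set Q : (Fin N → S) → Fin N → S → ℝ :=
    fun w j y => q s (w j) (emp w) (αv j s (w j) (emp w)) y with hQ
  have hQ0 : ∀ w j y, 0 ≤ Q w j y := fun w j y => hq0 _ _ _ _ _ (isProb_emp hN w)
  have hQ1 : ∀ w j, ∑ y, Q w j y = 1 := fun w j => hq1 _ _ _ _ (isProb_emp hN w)
  -- expand joint flow one step
  have expand : (∑ z : Fin N → S, jointFlow q αv t xv (s+1) z * W1 (emp z) (ν (s+1)))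
      = ∑ w : Fin N → S, P w * ∑ z : Fin N → S, (∏ j, Q w j (z j)) * W1 (emp z) (ν (s+1)) := by
    rw [jointFlow_succ αv t xv hs]
    simp only [Finset.sum_mul, Finset.mul_sum]
    rw [Finset.sum_comm]
    refine Finset.sum_congr rfl fun w _ => Finset.sum_congr rfl fun z _ => by ring
  rw [expand]
  -- bound the inner sum for each w
  have inner_bound : ∀ w : Fin N → S,
      (∑ z : Fin N → S, (∏ j, Q w j (z j)) * W1 (emp z) (ν (s+1)))
        ≤ (Fintype.card S : ℝ) / (2 * Real.sqrt N) + 2 / N + (1 + c1) * W1 (emp w) (ν s) := by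
    intro w
    have hew : IsProb (emp w) := isProb_emp hN w
    set mw : S → ℝ := fun y => (∑ j, Q w j y) / N with hmw
    set m'w : S → ℝ := fun y => ∑ x, emp w x * q s x (emp w) (α s x (emp w)) y with hm'w
    have prodsum1 : ∑ z : Fin N → S, (∏ j, Q w j (z j)) = 1 := by
      rw [sum_prod_pi (fun j y => Q w j y)]
      rw [Finset.prod_congr rfl fun j _ => hQ1 w j]
      simp
    have step1 : (∑ z : Fin N → S, (∏ j, Q w j (z j)) * W1 (emp z) (ν (s+1)))
        ≤ (∑ z : Fin N → S, (∏ j, Q w j (z j)) * W1 (emp z) mw) + W1 mw (ν (s+1)) := by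
      calc (∑ z : Fin N → S, (∏ j, Q w j (z j)) * W1 (emp z) (ν (s+1)))
          ≤ ∑ z : Fin N → S, (∏ j, Q w j (z j)) * (W1 (emp z) mw + W1 mw (ν (s+1))) := by
            refine Finset.sum_le_sum fun z _ => ?_
            refine mul_le_mul_of_nonneg_left (W1_triangle _ _ _) ?_
            exact Finset.prod_nonneg fun j _ => hQ0 w j (z j)
        _ = (∑ z : Fin N → S, (∏ j, Q w j (z j)) * W1 (emp z) mw)
            + (∑ z : Fin N → S, (∏ j, Q w j (z j))) * W1 mw (ν (s+1)) := by
            rw [Finset.sum_mul, ← Finset.sum_add_distrib]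
            exact Finset.sum_congr rfl fun z _ => by ring
        _ = _ := by rw [prodsum1, one_mul]
    have conc_bound : (∑ z : Fin N → S, (∏ j, Q w j (z j)) * W1 (emp z) mw)
        ≤ (Fintype.card S : ℝ) / (2 * Real.sqrt N) :=
      concentration hN (Q w) (hQ0 w) (hQ1 w)
    -- compare mw with m'w : only coordinate i differs
    have diff1 : W1 mw m'w ≤ 2 / N := by
      have hm'alt : ∀ y, m'w y = (∑ j, q s (w j) (emp w) (α s (w j) (emp w)) y) / N :=
        fun y => emp_avg hN w _
      have hdiff : ∀ y, mw y - m'w y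
          = (Q w i y - q s (w i) (emp w) (α s (w i) (emp w)) y) / N := by
        intro y
        rw [hm'alt y]
        rw [div_sub_div_same, ← Finset.sum_sub_distrib]
        congr 1
        rw [Finset.sum_eq_single_of_mem i (Finset.mem_univ i)]
        intro j _ hj
        simp only [hQ, hαv, replaceI, if_neg hj, sub_self]
      calc W1 mw m'w = ∑ y, |Q w i y - q s (w i) (emp w) (α s (w i) (emp w)) y| / N := by
            refine Finset.sum_congr rfl fun y _ => ?_
            rw [hdiff y, abs_div, Nat.abs_cast]
        _ ≤ ∑ y, (Q w i y + q s (w i) (emp w) (α s (w i) (emp w)) y) / N := by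
            refine Finset.sum_le_sum fun y _ => ?_
            have ha := hQ0 w i y
            have hb := hq0 s (w i) (emp w) (α s (w i) (emp w)) y hew
            have h1 : |Q w i y - q s (w i) (emp w) (α s (w i) (emp w)) y|
                ≤ Q w i y + q s (w i) (emp w) (α s (w i) (emp w)) y :=
              abs_le.mpr ⟨by linarith, by linarith⟩
            gcongr
        _ = 2 / N := by
            rw [← Finset.sum_div, Finset.sum_add_distrib, hQ1 w i,
              hq1 _ _ _ _ hew]
            norm_num
    have diff2 : W1 m'w (ν (s+1)) ≤ (1 + c1) * W1 (emp w) (ν s) := by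
      have hflow : ν (s+1) = fun y => ∑ x, ν s x * q s x (ν s) (α s x (ν s)) y :=
        flowM_succ α t μ hs
      have hker := kernel_diff (emp w) (ν s)
        (fun x y => q s x (emp w) (α s x (emp w)) y)
        (fun x y => q s x (ν s) (α s x (ν s)) y)
        (fun x y => hq0 _ _ _ _ _ hew) (fun x => hq1 _ _ _ _ hew) (fun x => (hνP s).1 x)
      have hqd : ∀ x : S, (∑ y, |q s x (emp w) (α s x (emp w)) y - q s x (ν s) (α s x (ν s)) y|)
          ≤ c1 * W1 (emp w) (ν s) :=
        fun x => q_tv_diff hqLip hew (hνP s) (hα s x (emp w) (ν s))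
      calc W1 m'w (ν (s+1)) = ∑ y, |(∑ x, emp w x * q s x (emp w) (α s x (emp w)) y)
            - ∑ x, ν s x * q s x (ν s) (α s x (ν s)) y| := by
            rw [hflow]; rfl
        _ ≤ (∑ x, |emp w x - ν s x|) + ∑ x, ν s x *
              ∑ y, |q s x (emp w) (α s x (emp w)) y - q s x (ν s) (α s x (ν s)) y| := hker
        _ ≤ W1 (emp w) (ν s) + ∑ x, ν s x * (c1 * W1 (emp w) (ν s)) := by
            refine add_le_add le_rfl (Finset.sum_le_sum fun x _ => ?_)
            exact mul_le_mul_of_nonneg_left (hqd x) ((hνP s).1 x)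
        _ = (1 + c1) * W1 (emp w) (ν s) := by
            rw [← Finset.sum_mul, (hνP s).2]; ring
    calc (∑ z : Fin N → S, (∏ j, Q w j (z j)) * W1 (emp z) (ν (s+1)))
        ≤ (∑ z : Fin N → S, (∏ j, Q w j (z j)) * W1 (emp z) mw) + W1 mw (ν (s+1)) := step1
      _ ≤ (Fintype.card S : ℝ) / (2 * Real.sqrt N) + (W1 mw m'w + W1 m'w (ν (s+1))) :=
          add_le_add conc_bound (W1_triangle _ _ _)
      _ ≤ (Fintype.card S : ℝ) / (2 * Real.sqrt N) + 2 / N + (1 + c1) * W1 (emp w) (ν s) := by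
          rw [add_assoc]
          exact add_le_add le_rfl (add_le_add diff1 diff2)
  -- combine
  have sqrtN := sqrt_N_pos hN
  have hNR : (0:ℝ) < N := by exact_mod_cast hN
  calc ∑ w : Fin N → S, P w * ∑ z : Fin N → S, (∏ j, Q w j (z j)) * W1 (emp z) (ν (s+1))
      ≤ ∑ w : Fin N → S, P w * ((Fintype.card S : ℝ) / (2 * Real.sqrt N) + 2 / N
          + (1 + c1) * W1 (emp w) (ν s)) := by
        refine Finset.sum_le_sum fun w _ => ?_
        exact mul_le_mul_of_nonneg_left (inner_bound w) (hPprob.1 w)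
    _ = ((Fintype.card S : ℝ) / (2 * Real.sqrt N) + 2 / N) * (∑ w : Fin N → S, P w)
        + (1 + c1) * ∑ w : Fin N → S, P w * W1 (emp w) (ν s) := by
        rw [Finset.mul_sum, Finset.mul_sum, ← Finset.sum_add_distrib]
        exact Finset.sum_congr rfl fun w _ => by ring
    _ = (1 + c1) * (∑ w : Fin N → S, P w * W1 (emp w) (ν s))
        + ((Fintype.card S : ℝ) / (2 * Real.sqrt N) + 2 / N) := by
        rw [hPprob.2, mul_one]; ring
    _ ≤ (1 + c1) * (∑ w : Fin N → S, P w * W1 (emp w) (ν s))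
        + ((Fintype.card S : ℝ)/2 + 2) / Real.sqrt N := by
        refine add_le_add le_rfl ?_
        have h1 : (Fintype.card S : ℝ) / (2 * Real.sqrt N)
            = ((Fintype.card S : ℝ)/2) / Real.sqrt N := by ring
        have h2 : 2 / (N:ℝ) ≤ 2 / Real.sqrt N := by
          apply div_le_div_of_nonneg_left (by norm_num) sqrtN
          calc Real.sqrt N ≤ Real.sqrt N * Real.sqrt N := by
                nlinarith [Real.one_le_sqrt.mpr (show (1:ℝ) ≤ N by exact_mod_cast hN), sqrtN]
            _ = N := Real.mul_self_sqrt hNR.le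
        rw [h1, add_div]
        exact add_le_add le_rfl h2

lemma m_init {N : ℕ} (αv : Fin N → ℕ → S → (S → ℝ) → A) (t : ℕ) (xv : Fin N → S)
    (α : ℕ → S → (S → ℝ) → A) (μ : S → ℝ) :
    (∑ w : Fin N → S, jointFlow q αv t xv t w * W1 (emp w) (flowM q α t μ t))
      = W1 (emp xv) μ := by
  rw [jointFlow_of_le αv t xv le_rfl, flowM_of_le α t μ le_rfl]
  simp only [ite_mul, one_mul, zero_mul]
  rw [Finset.sum_ite_eq' Finset.univ xv (fun w => W1 (emp w) μ)]
  simp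

lemma m_bound
    (hq01 : ∀ s x μ a y, IsProb μ → 0 < q s x μ a y ∧ q s x μ a y < 1)
    (hq1 : ∀ s x μ a, IsProb μ → ∑ y, q s x μ a y = 1)
    (hqLip : ∀ s x μ ν a b y, IsProb μ → IsProb ν →
      |q s x μ a y - q s x ν b y| ≤ Lq * (W1 μ ν + dist a b))
    {N : ℕ} (hN : 0 < N) (t : ℕ) (xv : Fin N → S) {μ : S → ℝ} (hμ : IsProb μ)
    (α αt : ℕ → S → (S → ℝ) → A) (hα : LipCtrl L α) (hαt : LipCtrl L αt) (hL : 0 ≤ L)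
    (i : Fin N) {θ : ℝ} (hθ1 : W1 (emp xv) μ ≤ θ) (hθ2 : 1 / Real.sqrt N ≤ θ)
    (hθ0 : 0 ≤ θ) {s : ℕ} (hs : t ≤ s) :
    (∑ w : Fin N → S, jointFlow q (replaceI α αt i) t xv s w *
        W1 (emp w) (flowM q α t μ s))
      ≤ (1 + (Fintype.card S : ℝ) * max Lq 0 * (1+L) + ((Fintype.card S : ℝ)/2 + 2)) ^ (s - t)
          * θ := by
  set c1 : ℝ := (Fintype.card S : ℝ) * max Lq 0 * (1+L) with hc1
  have hc1nn : 0 ≤ c1 := by positivity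
  set Dc : ℝ := (Fintype.card S : ℝ)/2 + 2 with hDc
  have hDcnn : (0:ℝ) ≤ Dc := by positivity
  set B : ℝ := 1 + c1 + Dc with hB
  have hB1 : (1:ℝ) ≤ B := by simp only [hB]; linarith
  induction s, hs using Nat.le_induction with
  | base =>
    rw [m_init (replaceI α αt i) t xv α μ]
    simp only [Nat.sub_self, pow_zero, one_mul]
    exact hθ1
  | succ s hts ih =>
    have hBpow : (1:ℝ) ≤ B ^ (s - t) := one_le_pow₀ hB1
    calc (∑ w : Fin N → S, jointFlow q (replaceI α αt i) t xv (s+1) w *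
          W1 (emp w) (flowM q α t μ (s+1)))
        ≤ (1 + c1) * (∑ w : Fin N → S, jointFlow q (replaceI α αt i) t xv s w *
            W1 (emp w) (flowM q α t μ s)) + Dc / Real.sqrt N :=
          m_step hq01 hq1 hqLip hN t xv hμ α αt hα hαt hL i hts
      _ ≤ (1 + c1) * (B ^ (s - t) * θ) + Dc * θ := by
          refine add_le_add (mul_le_mul_of_nonneg_left ih (by linarith)) ?_
          rw [div_eq_mul_one_div]
          exact mul_le_mul_of_nonneg_left hθ2 hDcnn
      _ ≤ B ^ (s + 1 - t) * θ := by
          have : s + 1 - t = (s - t) + 1 := by omega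
          rw [this, pow_succ]
          have key : (1 + c1) * B ^ (s - t) + Dc ≤ B ^ (s - t) * B := by
            rw [hB]
            nlinarith [hBpow]
          nlinarith [hθ0, hBpow]

end Main

/-- marginal law of player `i`. -/
noncomputable def lawI (q : ℕ → S → (S → ℝ) → A → S → ℝ) {N : ℕ}
    (αv : Fin N → ℕ → S → (S → ℝ) → A) (t : ℕ) (xv : Fin N → S) (i : Fin N)
    (s : ℕ) (x : S) : ℝ :=
  ∑ w : Fin N → S, jointFlow q αv t xv s w * (if w i = x then 1 else 0)

section Main2
variable [PseudoMetricSpace A]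
variable {q : ℕ → S → (S → ℝ) → A → S → ℝ} {Lq L : ℝ}

lemma lawI_t {N : ℕ} (αv : Fin N → ℕ → S → (S → ℝ) → A) (t : ℕ) (xv : Fin N → S)
    (i : Fin N) {s : ℕ} (hs : s ≤ t) :
    lawI q αv t xv i s = fun x => if x = xv i then 1 else 0 := by
  funext x
  rw [lawI, jointFlow_of_le αv t xv hs]
  simp only [ite_mul, one_mul, zero_mul]
  rw [Finset.sum_ite_eq' Finset.univ xv (fun w => if w i = x then (1:ℝ) else 0)]
  simp only [Finset.mem_univ, if_true]
  by_cases h : xv i = x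
  · rw [if_pos h, if_pos h.symm]
  · rw [if_neg h, if_neg (Ne.symm h)]

lemma lawI_succ
    (hq01 : ∀ s x μ a y, IsProb μ → 0 < q s x μ a y ∧ q s x μ a y < 1)
    (hq1 : ∀ s x μ a, IsProb μ → ∑ y, q s x μ a y = 1)
    {N : ℕ} (hN : 0 < N) (αv : Fin N → ℕ → S → (S → ℝ) → A) (t : ℕ) (xv : Fin N → S)
    (i : Fin N) {s : ℕ} (hs : t ≤ s) (x' : S) :
    lawI q αv t xv i (s+1) x' = ∑ w : Fin N → S, jointFlow q αv t xv s w *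
      q s (w i) (emp w) (αv i s (w i) (emp w)) x' := by
  rw [lawI, jointFlow_succ αv t xv hs]
  simp only [Finset.sum_mul]
  rw [Finset.sum_comm]
  refine Finset.sum_congr rfl fun w _ => ?_
  have inner : ∑ z : Fin N → S, (∏ j, q s (w j) (emp w) (αv j s (w j) (emp w)) (z j)) *
        (if z i = x' then (1:ℝ) else 0)
      = q s (w i) (emp w) (αv i s (w i) (emp w)) x' := by
    rw [sum_prod_single (fun j y => q s (w j) (emp w) (αv j s (w j) (emp w)) y)
      (fun j => hq1 _ _ _ _ (isProb_emp hN w)) i (fun y => if y = x' then 1 else 0)]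
    simp only [mul_ite, mul_one, mul_zero]
    rw [Finset.sum_ite_eq' Finset.univ x']
    simp
  calc ∑ z : Fin N → S, jointFlow q αv t xv s w *
        (∏ j, q s (w j) (emp w) (αv j s (w j) (emp w)) (z j)) *
        (if z i = x' then (1:ℝ) else 0)
      = jointFlow q αv t xv s w * ∑ z : Fin N → S,
          (∏ j, q s (w j) (emp w) (αv j s (w j) (emp w)) (z j)) *
          (if z i = x' then (1:ℝ) else 0) := by
        rw [Finset.mul_sum]
        exact Finset.sum_congr rfl fun z _ => by ring
    _ = _ := by rw [inner]

lemma e_step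
    (hq01 : ∀ s x μ a y, IsProb μ → 0 < q s x μ a y ∧ q s x μ a y < 1)
    (hq1 : ∀ s x μ a, IsProb μ → ∑ y, q s x μ a y = 1)
    (hqLip : ∀ s x μ ν a b y, IsProb μ → IsProb ν →
      |q s x μ a y - q s x ν b y| ≤ Lq * (W1 μ ν + dist a b))
    {N : ℕ} (hN : 0 < N) (t : ℕ) (xv : Fin N → S) {μ : S → ℝ} (hμ : IsProb μ)
    (α αt : ℕ → S → (S → ℝ) → A) (hα : LipCtrl L α) (hαt : LipCtrl L αt) (hL : 0 ≤ L)
    (i : Fin N) {s : ℕ} (hs : t ≤ s) :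
    (∑ x, |lawI q (replaceI α αt i) t xv i (s+1) x
        - chainM q (flowM q α t μ) αt t (xv i) (s+1) x|)
      ≤ (∑ x, |lawI q (replaceI α αt i) t xv i s x
          - chainM q (flowM q α t μ) αt t (xv i) s x|)
        + ((Fintype.card S : ℝ) * max Lq 0 * (1+L)) *
          (∑ w : Fin N → S, jointFlow q (replaceI α αt i) t xv s w *
            W1 (emp w) (flowM q α t μ s)) := by
  have hq0 : ∀ s x μ a y, IsProb μ → 0 ≤ q s x μ a y := fun s x μ a y h => (hq01 s x μ a y h).1.le
  set c1 : ℝ := (Fintype.card S : ℝ) * max Lq 0 * (1+L) with hc1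
  set ν : ℕ → S → ℝ := flowM q α t μ with hν
  have hνP : ∀ r, IsProb (ν r) := flowM_isProb hq0 hq1 α t μ hμ
  set αv := replaceI α αt i with hαv
  have hαvi : αv i = αt := by rw [hαv, replaceI, if_pos rfl]
  set P := jointFlow q αv t xv s with hP
  have hPprob := jointFlow_isProb hq0 hq1 hN αv t xv s
  have hCH := chainM_isProb hq0 hq1 hνP αt t (xv i) s
  -- the three measures on S
  set K : (Fin N → S) → S → ℝ := fun w x' => q s (w i) (emp w) (αt s (w i) (emp w)) x' with hK
  set K' : (Fin N → S) → S → ℝ := fun w x' => q s (w i) (ν s) (αt s (w i) (ν s)) x' with hK'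
  have hLawSucc : ∀ x', lawI q αv t xv i (s+1) x' = ∑ w : Fin N → S, P w * K w x' := by
    intro x'
    rw [lawI_succ hq01 hq1 hN αv t xv i hs x']
    refine Finset.sum_congr rfl fun w _ => ?_
    rw [hK, hαvi]
  have hCHSucc : ∀ x', chainM q ν αt t (xv i) (s+1) x'
      = ∑ x, chainM q ν αt t (xv i) s x * q s x (ν s) (αt s x (ν s)) x' := by
    intro x'; rw [chainM_succ ν αt t (xv i) hs]
  have hMid : ∀ x', (∑ w : Fin N → S, P w * K' w x')
      = ∑ x, lawI q αv t xv i s x * q s x (ν s) (αt s x (ν s)) x' := by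
    intro x'
    rw [group_by_coord P i (fun x => q s x (ν s) (αt s x (ν s)) x')]
    rfl
  calc ∑ x', |lawI q αv t xv i (s+1) x' - chainM q ν αt t (xv i) (s+1) x'|
      ≤ ∑ x', (|(∑ w : Fin N → S, P w * K w x') - ∑ w : Fin N → S, P w * K' w x'|
          + |(∑ w : Fin N → S, P w * K' w x') - chainM q ν αt t (xv i) (s+1) x'|) := by
        refine Finset.sum_le_sum fun x' _ => ?_
        rw [hLawSucc x']
        exact abs_sub_le _ _ _
    _ ≤ c1 * (∑ w : Fin N → S, P w * W1 (emp w) (ν s))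
        + ∑ x, |lawI q αv t xv i s x - chainM q ν αt t (xv i) s x| := by
        rw [Finset.sum_add_distrib]
        refine add_le_add ?_ ?_
        · -- kernel difference in the measure argument
          refine le_trans (kernel_diff P P K K'
            (fun w x' => hq0 _ _ _ _ _ (isProb_emp hN w))
            (fun w => hq1 _ _ _ _ (isProb_emp hN w)) hPprob.1) ?_
          have hzero : (∑ w : Fin N → S, |P w - P w|) = 0 := by simp
          rw [hzero, zero_add, Finset.mul_sum]
          refine Finset.sum_le_sum fun w _ => ?_
          have hqd : (∑ x', |K w x' - K' w x'|) ≤ c1 * W1 (emp w) (ν s) :=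
            q_tv_diff hqLip (isProb_emp hN w) (hνP s) (hαt s (w i) (emp w) (ν s))
          calc P w * ∑ x', |K w x' - K' w x'| ≤ P w * (c1 * W1 (emp w) (ν s)) :=
                mul_le_mul_of_nonneg_left hqd (hPprob.1 w)
            _ = c1 * (P w * W1 (emp w) (ν s)) := by ring
        · -- kernel contraction
          have := kernel_diff (lawI q αv t xv i s) (chainM q ν αt t (xv i) s)
            (fun x x' => q s x (ν s) (αt s x (ν s)) x')
            (fun x x' => q s x (ν s) (αt s x (ν s)) x')
            (fun x x' => hq0 _ _ _ _ _ (hνP s)) (fun x => hq1 _ _ _ _ (hνP s)) hCH.1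
          simp only [sub_self, abs_zero, Finset.sum_const_zero, mul_zero, add_zero] at this
          refine le_trans (le_of_eq ?_) this
          refine Finset.sum_congr rfl fun x' _ => ?_
          rw [hMid x', hCHSucc x']
    _ = _ := by ring

lemma e_init {N : ℕ} (αv : Fin N → ℕ → S → (S → ℝ) → A) (ν : ℕ → S → ℝ)
    (αt : ℕ → S → (S → ℝ) → A) (t : ℕ) (xv : Fin N → S) (i : Fin N) :
    (∑ x, |lawI q αv t xv i t x - chainM q ν αt t (xv i) t x|) = 0 := by
  rw [lawI_t αv t xv i le_rfl, chainM_of_le ν αt t (xv i) le_rfl]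
  simp

lemma e_bound
    (hq01 : ∀ s x μ a y, IsProb μ → 0 < q s x μ a y ∧ q s x μ a y < 1)
    (hq1 : ∀ s x μ a, IsProb μ → ∑ y, q s x μ a y = 1)
    (hqLip : ∀ s x μ ν a b y, IsProb μ → IsProb ν →
      |q s x μ a y - q s x ν b y| ≤ Lq * (W1 μ ν + dist a b))
    {N : ℕ} (hN : 0 < N) {T t : ℕ} (xv : Fin N → S) {μ : S → ℝ} (hμ : IsProb μ)
    (α αt : ℕ → S → (S → ℝ) → A) (hα : LipCtrl L α) (hαt : LipCtrl L αt) (hL : 0 ≤ L)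
    (i : Fin N) {θ : ℝ} (hθ1 : W1 (emp xv) μ ≤ θ) (hθ2 : 1 / Real.sqrt N ≤ θ)
    (hθ0 : 0 ≤ θ) {s : ℕ} (hs : t ≤ s) (hsT : s ≤ T) :
    (∑ x, |lawI q (replaceI α αt i) t xv i s x
        - chainM q (flowM q α t μ) αt t (xv i) s x|)
      ≤ (T:ℝ) * (((Fintype.card S : ℝ) * max Lq 0 * (1+L)) *
          ((1 + (Fintype.card S : ℝ) * max Lq 0 * (1+L)
            + ((Fintype.card S : ℝ)/2 + 2)) ^ T * θ)) := by
  set c1 : ℝ := (Fintype.card S : ℝ) * max Lq 0 * (1+L) with hc1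
  have hc1nn : 0 ≤ c1 := by positivity
  set Dc : ℝ := (Fintype.card S : ℝ)/2 + 2 with hDc
  set B : ℝ := 1 + c1 + Dc with hB
  have hB1 : (1:ℝ) ≤ B := by
    have h2 : (0:ℝ) ≤ Dc := by rw [hDc]; positivity
    rw [hB]; linarith
  have hX0 : 0 ≤ c1 * (B ^ T * θ) := by positivity
  have H : ∀ s, t ≤ s → s ≤ T →
      (∑ x, |lawI q (replaceI α αt i) t xv i s x
          - chainM q (flowM q α t μ) αt t (xv i) s x|)
        ≤ ((s - t : ℕ) : ℝ) * (c1 * (B ^ T * θ)) := by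
    intro s hs
    induction s, hs using Nat.le_induction with
    | base =>
      intro _
      rw [e_init (replaceI α αt i) (flowM q α t μ) αt t xv i]
      positivity
    | succ s hts ih =>
      intro hsT1
      have hsT0 : s ≤ T := by omega
      have hm : (∑ w : Fin N → S, jointFlow q (replaceI α αt i) t xv s w *
            W1 (emp w) (flowM q α t μ s)) ≤ B ^ T * θ := by
        refine (m_bound hq01 hq1 hqLip hN t xv hμ α αt hα hαt hL i hθ1 hθ2 hθ0 hts).trans ?_
        have : B ^ (s - t) ≤ B ^ T := pow_le_pow_right₀ hB1 (by omega)
        exact mul_le_mul_of_nonneg_right this hθ0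
      calc (∑ x, |lawI q (replaceI α αt i) t xv i (s+1) x
            - chainM q (flowM q α t μ) αt t (xv i) (s+1) x|)
          ≤ (∑ x, |lawI q (replaceI α αt i) t xv i s x
              - chainM q (flowM q α t μ) αt t (xv i) s x|)
            + c1 * (∑ w : Fin N → S, jointFlow q (replaceI α αt i) t xv s w *
              W1 (emp w) (flowM q α t μ s)) :=
            e_step hq01 hq1 hqLip hN t xv hμ α αt hα hαt hL i hts
        _ ≤ ((s - t : ℕ) : ℝ) * (c1 * (B ^ T * θ)) + c1 * (B ^ T * θ) :=
            add_le_add (ih hsT0) (mul_le_mul_of_nonneg_left hm hc1nn)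
        _ ≤ ((s + 1 - t : ℕ) : ℝ) * (c1 * (B ^ T * θ)) := by
            have : ((s + 1 - t : ℕ) : ℝ) = ((s - t : ℕ) : ℝ) + 1 := by
              have : s + 1 - t = (s - t) + 1 := by omega
              rw [this]; push_cast; ring
            rw [this]; ring_nf; rfl
  refine (H s hs hsT).trans ?_
  refine mul_le_mul_of_nonneg_right ?_ hX0
  have : ((s - t:ℕ):ℝ) ≤ (T:ℝ) := by exact_mod_cast Nat.le_of_lt_succ (by omega)
  exact this

lemma step_cost {N : ℕ} {ρ : ℝ → ℝ} {C₀' L δ : ℝ}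
    (hρmono : Monotone ρ) (hρnn : 0 ≤ ρ 0) (hL : 0 ≤ L) (hC₀' : 0 ≤ C₀') (hδ : 0 < δ)
    (P : (Fin N → S) → ℝ) (hP0 : ∀ w, 0 ≤ P w) (hP1 : ∑ w : Fin N → S, P w = 1)
    (CH : S → ℝ) (hCH0 : ∀ x, 0 ≤ CH x)
    (νs : S → ℝ) (φ : S → (S → ℝ) → ℝ) (i : Fin N)
    (hφc : ∀ w : Fin N → S, |φ (w i) (emp w) - φ (w i) νs| ≤ ρ ((1+L) * W1 (emp w) νs))
    (hφb : ∀ w : Fin N → S, |φ (w i) (emp w) - φ (w i) νs| ≤ 2 * C₀')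
    (hφb2 : ∀ x, |φ x νs| ≤ C₀') :
    |(∑ w : Fin N → S, P w * φ (w i) (emp w)) - ∑ x, CH x * φ x νs|
      ≤ ρ ((1+L) * δ) + (2 * C₀' / δ) * (∑ w : Fin N → S, P w * W1 (emp w) νs)
        + C₀' * (∑ x, |(∑ w : Fin N → S, P w * (if w i = x then 1 else 0)) - CH x|) := by
  have hρconst : 0 ≤ ρ ((1+L)*δ) := le_trans hρnn (hρmono (by positivity))
  have pt : ∀ w : Fin N → S, |φ (w i) (emp w) - φ (w i) νs|
      ≤ ρ ((1+L)*δ) + (2*C₀'/δ) * W1 (emp w) νs := by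
    intro w
    have hu : 0 ≤ W1 (emp w) νs := W1_nonneg _ _
    have hcoef : 0 ≤ 2*C₀'/δ := by positivity
    by_cases hc : W1 (emp w) νs ≤ δ
    · refine (hφc w).trans ?_
      have h1 : ρ ((1+L) * W1 (emp w) νs) ≤ ρ ((1+L)*δ) := hρmono (by nlinarith)
      nlinarith [mul_nonneg hcoef hu]
    · push_neg at hc
      have h1 : 2*C₀' ≤ (2*C₀'/δ) * W1 (emp w) νs := by
        rw [div_mul_eq_mul_div, le_div_iff₀ hδ]
        nlinarith
      exact (hφb w).trans (by nlinarith)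
  set Mid : ℝ := ∑ w : Fin N → S, P w * φ (w i) νs with hMid
  have partA : |(∑ w : Fin N → S, P w * φ (w i) (emp w)) - Mid|
      ≤ ρ ((1+L) * δ) + (2 * C₀' / δ) * (∑ w : Fin N → S, P w * W1 (emp w) νs) := by
    rw [hMid, ← Finset.sum_sub_distrib]
    refine (Finset.abs_sum_le_sum_abs _ _).trans ?_
    calc ∑ w : Fin N → S, |P w * φ (w i) (emp w) - P w * φ (w i) νs|
        ≤ ∑ w : Fin N → S, P w * (ρ ((1+L)*δ) + (2*C₀'/δ) * W1 (emp w) νs) := by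
          refine Finset.sum_le_sum fun w _ => ?_
          rw [← mul_sub, abs_mul, abs_of_nonneg (hP0 w)]
          exact mul_le_mul_of_nonneg_left (pt w) (hP0 w)
      _ = ρ ((1+L)*δ) * (∑ w : Fin N → S, P w)
          + (2*C₀'/δ) * (∑ w : Fin N → S, P w * W1 (emp w) νs) := by
          rw [Finset.mul_sum, Finset.mul_sum, ← Finset.sum_add_distrib]
          exact Finset.sum_congr rfl fun w _ => by ring
      _ = _ := by rw [hP1, mul_one]
  have partB : |Mid - ∑ x, CH x * φ x νs|
      ≤ C₀' * (∑ x, |(∑ w : Fin N → S, P w * (if w i = x then 1 else 0)) - CH x|) := by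
    have hMid2 : Mid = ∑ x, (∑ w : Fin N → S, P w * (if w i = x then 1 else 0)) * φ x νs := by
      rw [hMid, group_by_coord P i (fun x => φ x νs)]
    rw [hMid2, ← Finset.sum_sub_distrib]
    refine (Finset.abs_sum_le_sum_abs _ _).trans ?_
    rw [Finset.mul_sum]
    refine Finset.sum_le_sum fun x _ => ?_
    rw [← sub_mul, abs_mul]
    rw [mul_comm (C₀') _]
    exact mul_le_mul_of_nonneg_left (hφb2 x) (abs_nonneg _)
  calc |(∑ w : Fin N → S, P w * φ (w i) (emp w)) - ∑ x, CH x * φ x νs|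
      ≤ |(∑ w : Fin N → S, P w * φ (w i) (emp w)) - Mid| + |Mid - ∑ x, CH x * φ x νs| :=
        abs_sub_le _ _ _
    _ ≤ _ := by
        refine le_trans (add_le_add partA partB) ?_
        exact le_of_eq rfl

lemma J_diff {F : ℕ → S → (S → ℝ) → A → ℝ} {G : S → (S → ℝ) → ℝ} {ρ : ℝ → ℝ} {C₀ : ℝ}
    (hρmono : Monotone ρ) (hρnn : 0 ≤ ρ 0)
    (hq01 : ∀ s x μ a y, IsProb μ → 0 < q s x μ a y ∧ q s x μ a y < 1)
    (hq1 : ∀ s x μ a, IsProb μ → ∑ y, q s x μ a y = 1)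
    (hqLip : ∀ s x μ ν a b y, IsProb μ → IsProb ν →
      |q s x μ a y - q s x ν b y| ≤ Lq * (W1 μ ν + dist a b))
    (hFb : ∀ s x μ a, IsProb μ → |F s x μ a| ≤ C₀)
    (hGb : ∀ x μ, IsProb μ → |G x μ| ≤ C₀)
    (hFc : ∀ s x μ ν a b, IsProb μ → IsProb ν →
      |F s x μ a - F s x ν b| ≤ ρ (W1 μ ν + dist a b))
    (hGc : ∀ x μ ν, IsProb μ → IsProb ν → |G x μ - G x ν| ≤ ρ (W1 μ ν))
    {N : ℕ} (hN : 0 < N) {T t : ℕ} (htT : t ≤ T) (xv : Fin N → S) {μ : S → ℝ}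
    (hμ : IsProb μ) (α αt : ℕ → S → (S → ℝ) → A) (hα : LipCtrl L α) (hαt : LipCtrl L αt)
    (hL : 0 ≤ L) (i : Fin N) {θ δ : ℝ} (hδ : 0 < δ)
    (hθ1 : W1 (emp xv) μ ≤ θ) (hθ2 : 1 / Real.sqrt N ≤ θ) (hθ0 : 0 ≤ θ) :
    |Ji q F G T t xv (replaceI α αt i) i - costM q F G T (flowM q α t μ) t (xv i) αt|
      ≤ ((T:ℝ)+1) * (ρ ((1+L)*δ)
          + (2 * max C₀ 0 / δ) * ((1 + (Fintype.card S : ℝ) * max Lq 0 * (1+L)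
              + ((Fintype.card S : ℝ)/2 + 2)) ^ T * θ)
          + max C₀ 0 * ((T:ℝ) * (((Fintype.card S : ℝ) * max Lq 0 * (1+L)) *
              ((1 + (Fintype.card S : ℝ) * max Lq 0 * (1+L)
                + ((Fintype.card S : ℝ)/2 + 2)) ^ T * θ)))) := by
  have hq0 : ∀ s x μ a y, IsProb μ → 0 ≤ q s x μ a y := fun s x μ a y h => (hq01 s x μ a y h).1.le
  set c1 : ℝ := (Fintype.card S : ℝ) * max Lq 0 * (1+L) with hc1
  have hc1nn : 0 ≤ c1 := by positivity
  set Dc : ℝ := (Fintype.card S : ℝ)/2 + 2 with hDc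
  set B : ℝ := 1 + c1 + Dc with hB
  have hB1 : (1:ℝ) ≤ B := by
    have h2 : (0:ℝ) ≤ Dc := by rw [hDc]; positivity
    rw [hB]; linarith
  set C₀' : ℝ := max C₀ 0 with hC₀'
  have hC₀'nn : 0 ≤ C₀' := le_max_right _ _
  set ν : ℕ → S → ℝ := flowM q α t μ with hν
  have hνP : ∀ r, IsProb (ν r) := flowM_isProb hq0 hq1 α t μ hμ
  set αv := replaceI α αt i with hαv
  have hαvi : αv i = αt := by rw [hαv, replaceI, if_pos rfl]
  have hCHpr : ∀ r, IsProb (chainM q ν αt t (xv i) r) := chainM_isProb hq0 hq1 hνP αt t (xv i)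
  -- the per-step bound
  set Pbd : ℝ := ρ ((1+L)*δ) + (2 * C₀' / δ) * (B ^ T * θ)
      + C₀' * ((T:ℝ) * (c1 * (B ^ T * θ))) with hPbd
  have hm : ∀ {s : ℕ}, t ≤ s → s ≤ T →
      (∑ w : Fin N → S, jointFlow q αv t xv s w * W1 (emp w) (ν s)) ≤ B ^ T * θ := by
    intro s hts hsT
    refine (m_bound hq01 hq1 hqLip hN t xv hμ α αt hα hαt hL i hθ1 hθ2 hθ0 hts).trans ?_
    exact mul_le_mul_of_nonneg_right (pow_le_pow_right₀ hB1 (by omega)) hθ0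
  have he : ∀ {s : ℕ}, t ≤ s → s ≤ T →
      (∑ x, |(∑ w : Fin N → S, jointFlow q αv t xv s w * (if w i = x then 1 else 0))
          - chainM q ν αt t (xv i) s x|) ≤ (T:ℝ) * (c1 * (B ^ T * θ)) := by
    intro s hts hsT
    exact e_bound hq01 hq1 hqLip hN xv hμ α αt hα hαt hL i hθ1 hθ2 hθ0 hts hsT
  have hρconst : 0 ≤ ρ ((1+L)*δ) := le_trans hρnn (hρmono (by positivity))
  have hPbdnn : 0 ≤ Pbd := by
    rw [hPbd]
    have h1 : 0 ≤ (2 * C₀' / δ) * (B ^ T * θ) := by positivity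
    have h2 : 0 ≤ C₀' * ((T:ℝ) * (c1 * (B ^ T * θ))) := by positivity
    linarith
  -- step bound for F terms
  have hFstep : ∀ s ∈ Finset.Ico t T,
      |(∑ w : Fin N → S, jointFlow q αv t xv s w * F s (w i) (emp w) (αv i s (w i) (emp w)))
        - ∑ x, chainM q ν αt t (xv i) s x * F s x (ν s) (αt s x (ν s))| ≤ Pbd := by
    intro s hsmem
    rw [Finset.mem_Ico] at hsmem
    obtain ⟨hts, hsT⟩ := hsmem
    have hjp := jointFlow_isProb hq0 hq1 hN αv t xv s
    have step := step_cost (N := N) (δ := δ) hρmono hρnn hL hC₀'nn hδ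
      (jointFlow q αv t xv s) hjp.1 hjp.2
      (chainM q ν αt t (xv i) s) (hCHpr s).1 (ν s)
      (fun x m => F s x m (αt s x m)) i
      (fun w => by
        have hd : dist (αt s (w i) (emp w)) (αt s (w i) (ν s)) ≤ L * W1 (emp w) (ν s) :=
          hαt s (w i) (emp w) (ν s)
        have hW := W1_nonneg (emp w) (ν s)
        refine (hFc s (w i) (emp w) (ν s) _ _ (isProb_emp hN w) (hνP s)).trans ?_
        exact hρmono (by nlinarith))
      (fun w => by
        have h1 := hFb s (w i) (emp w) (αt s (w i) (emp w)) (isProb_emp hN w)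
        have h2 := hFb s (w i) (ν s) (αt s (w i) (ν s)) (hνP s)
        have h3 : C₀ ≤ C₀' := le_max_left _ _
        refine (abs_sub _ _).trans ?_
        linarith)
      (fun x => le_trans (hFb s x (ν s) (αt s x (ν s)) (hνP s)) (le_max_left _ _))
    refine le_trans ?_ (le_trans (add_le_add (add_le_add le_rfl
      (mul_le_mul_of_nonneg_left (hm hts hsT.le) (by positivity)))
      (mul_le_mul_of_nonneg_left (he hts hsT.le) hC₀'nn)) (le_of_eq hPbd.symm))
    have : ∀ w : Fin N → S, αv i s (w i) (emp w) = αt s (w i) (emp w) := by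
      intro w; rw [hαvi]
    simp only [this]
    exact step
  -- step bound for the G term
  have hGstep :
      |(∑ w : Fin N → S, jointFlow q αv t xv T w * G (w i) (emp w))
        - ∑ x, chainM q ν αt t (xv i) T x * G x (ν T)| ≤ Pbd := by
    have hjp := jointFlow_isProb hq0 hq1 hN αv t xv T
    have step := step_cost (N := N) (δ := δ) hρmono hρnn hL hC₀'nn hδ
      (jointFlow q αv t xv T) hjp.1 hjp.2
      (chainM q ν αt t (xv i) T) (hCHpr T).1 (ν T)
      (fun x m => G x m) i
      (fun w => by
        have hW := W1_nonneg (emp w) (ν T)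
        refine (hGc (w i) (emp w) (ν T) (isProb_emp hN w) (hνP T)).trans ?_
        exact hρmono (by nlinarith))
      (fun w => by
        have h1 := hGb (w i) (emp w) (isProb_emp hN w)
        have h2 := hGb (w i) (ν T) (hνP T)
        have h3 : C₀ ≤ C₀' := le_max_left _ _
        refine (abs_sub _ _).trans ?_
        linarith)
      (fun x => le_trans (hGb x (ν T) (hνP T)) (le_max_left _ _))
    refine le_trans step ?_
    refine le_trans (add_le_add (add_le_add le_rfl
      (mul_le_mul_of_nonneg_left (hm htT le_rfl) (by positivity)))
      (mul_le_mul_of_nonneg_left (he htT le_rfl) hC₀'nn)) (le_of_eq hPbd.symm)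
  -- assemble
  have hsplit : |Ji q F G T t xv αv i - costM q F G T ν t (xv i) αt|
      ≤ |(∑ w : Fin N → S, jointFlow q αv t xv T w * G (w i) (emp w))
          - ∑ x, chainM q ν αt t (xv i) T x * G x (ν T)|
        + ∑ s ∈ Finset.Ico t T,
          |(∑ w : Fin N → S, jointFlow q αv t xv s w * F s (w i) (emp w) (αv i s (w i) (emp w)))
            - ∑ x, chainM q ν αt t (xv i) s x * F s x (ν s) (αt s x (ν s))| := by
    rw [Ji, costM]
    have hrearr : (∑ w : Fin N → S, jointFlow q αv t xv T w * G (w i) (emp w))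
          + (∑ s ∈ Finset.Ico t T, ∑ w : Fin N → S, jointFlow q αv t xv s w *
              F s (w i) (emp w) (αv i s (w i) (emp w)))
          - ((∑ x, chainM q ν αt t (xv i) T x * G x (ν T))
            + ∑ s ∈ Finset.Ico t T, ∑ x, chainM q ν αt t (xv i) s x *
              F s x (ν s) (αt s x (ν s)))
        = ((∑ w : Fin N → S, jointFlow q αv t xv T w * G (w i) (emp w))
            - ∑ x, chainM q ν αt t (xv i) T x * G x (ν T))
          + ∑ s ∈ Finset.Ico t T,
            ((∑ w : Fin N → S, jointFlow q αv t xv s w *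
                F s (w i) (emp w) (αv i s (w i) (emp w)))
              - ∑ x, chainM q ν αt t (xv i) s x * F s x (ν s) (αt s x (ν s))) := by
      rw [Finset.sum_sub_distrib]
      ring
    rw [hrearr]
    refine (abs_add_le _ _).trans ?_
    exact add_le_add le_rfl (Finset.abs_sum_le_sum_abs _ _)
  refine hsplit.trans ?_
  calc |(∑ w : Fin N → S, jointFlow q αv t xv T w * G (w i) (emp w))
          - ∑ x, chainM q ν αt t (xv i) T x * G x (ν T)|
        + ∑ s ∈ Finset.Ico t T,
          |(∑ w : Fin N → S, jointFlow q αv t xv s w * F s (w i) (emp w) (αv i s (w i) (emp w)))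
            - ∑ x, chainM q ν αt t (xv i) s x * F s x (ν s) (αt s x (ν s))|
      ≤ Pbd + ∑ _s ∈ Finset.Ico t T, Pbd :=
        add_le_add hGstep (Finset.sum_le_sum hFstep)
    _ = Pbd + ((T - t : ℕ) : ℝ) * Pbd := by
        rw [Finset.sum_const, Nat.card_Ico, nsmul_eq_mul]
    _ ≤ Pbd + (T:ℝ) * Pbd := by
        have hTt : ((T - t : ℕ) : ℝ) ≤ (T:ℝ) := by
          exact_mod_cast Nat.sub_le T t
        exact add_le_add le_rfl (mul_le_mul_of_nonneg_right hTt hPbdnn)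
    _ = ((T:ℝ)+1) * Pbd := by ring

lemma chainM_ctrl_eq (ν : ℕ → S → ℝ) (αt' αt : ℕ → S → (S → ℝ) → A) (t : ℕ) (x₀ : S)
    (h : ∀ s x, αt' s x (ν s) = αt s x (ν s)) (s : ℕ) :
    chainM q ν αt' t x₀ s = chainM q ν αt t x₀ s := by
  induction s with
  | zero => rfl
  | succ n ih =>
    by_cases hc : n + 1 ≤ t
    · rw [chainM_of_le ν αt' t x₀ hc, chainM_of_le ν αt t x₀ hc]
    · have hts : t ≤ n := by omega
      rw [chainM_succ ν αt' t x₀ hts, chainM_succ ν αt t x₀ hts, ih]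
      funext y
      exact Finset.sum_congr rfl fun x _ => by rw [h n x]

lemma costM_ctrl_eq {F : ℕ → S → (S → ℝ) → A → ℝ} {G : S → (S → ℝ) → ℝ} {T : ℕ}
    (ν : ℕ → S → ℝ) (αt' αt : ℕ → S → (S → ℝ) → A) (t : ℕ) (x₀ : S)
    (h : ∀ s x, αt' s x (ν s) = αt s x (ν s)) :
    costM q F G T ν t x₀ αt' = costM q F G T ν t x₀ αt := by
  rw [costM, costM]
  congr 1
  · rw [chainM_ctrl_eq ν αt' αt t x₀ h T]
  · refine Finset.sum_congr rfl fun s _ => ?_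
    rw [chainM_ctrl_eq ν αt' αt t x₀ h s]
    exact Finset.sum_congr rfl fun x _ => by rw [h s x]

lemma exp_abs_le {ι : Type*} [Fintype ι] (p f : ι → ℝ) {C : ℝ}
    (hp0 : ∀ z, 0 ≤ p z) (hp1 : ∑ z, p z = 1) (hf : ∀ z, |f z| ≤ C) :
    |∑ z, p z * f z| ≤ C := by
  refine (Finset.abs_sum_le_sum_abs _ _).trans ?_
  calc ∑ z, |p z * f z| ≤ ∑ z, p z * C := by
        refine Finset.sum_le_sum fun z _ => ?_
        rw [abs_mul, abs_of_nonneg (hp0 z)]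
        exact mul_le_mul_of_nonneg_left (hf z) (hp0 z)
    _ = C := by rw [← Finset.sum_mul, hp1, one_mul]

lemma costM_bdd {F : ℕ → S → (S → ℝ) → A → ℝ} {G : S → (S → ℝ) → ℝ} {T : ℕ} {C₀ : ℝ}
    (hq0 : ∀ s x μ a y, IsProb μ → 0 ≤ q s x μ a y)
    (hq1 : ∀ s x μ a, IsProb μ → ∑ y, q s x μ a y = 1)
    (hFb : ∀ s x μ a, IsProb μ → |F s x μ a| ≤ C₀)
    (hGb : ∀ x μ, IsProb μ → |G x μ| ≤ C₀)
    {ν : ℕ → S → ℝ} (hν : ∀ s, IsProb (ν s)) (t : ℕ) (x₀ : S)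
    (αt : ℕ → S → (S → ℝ) → A) :
    |costM q F G T ν t x₀ αt| ≤ (1 + (T:ℝ)) * max C₀ 0 := by
  have hC' : C₀ ≤ max C₀ 0 := le_max_left _ _
  have hC0 : (0:ℝ) ≤ max C₀ 0 := le_max_right _ _
  have hCH := fun s => chainM_isProb hq0 hq1 hν αt t x₀ s
  rw [costM]
  refine (abs_add_le _ _).trans ?_
  have h1 : |∑ x, chainM q ν αt t x₀ T x * G x (ν T)| ≤ max C₀ 0 :=
    exp_abs_le _ _ (hCH T).1 (hCH T).2 (fun x => (hGb x (ν T) (hν T)).trans hC')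
  have h2 : |∑ s ∈ Finset.Ico t T, ∑ x, chainM q ν αt t x₀ s x * F s x (ν s) (αt s x (ν s))|
      ≤ (T:ℝ) * max C₀ 0 := by
    refine (Finset.abs_sum_le_sum_abs _ _).trans ?_
    calc ∑ s ∈ Finset.Ico t T, |∑ x, chainM q ν αt t x₀ s x * F s x (ν s) (αt s x (ν s))|
        ≤ ∑ _s ∈ Finset.Ico t T, max C₀ 0 := by
          refine Finset.sum_le_sum fun s _ => ?_
          exact exp_abs_le _ _ (hCH s).1 (hCH s).2
            (fun x => (hFb s x (ν s) (αt s x (ν s)) (hν s)).trans hC')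
      _ = ((T - t:ℕ):ℝ) * max C₀ 0 := by rw [Finset.sum_const, Nat.card_Ico, nsmul_eq_mul]
      _ ≤ (T:ℝ) * max C₀ 0 := by
          refine mul_le_mul_of_nonneg_right ?_ hC0
          exact_mod_cast Nat.sub_le T t
  linarith

lemma Ji_bdd {F : ℕ → S → (S → ℝ) → A → ℝ} {G : S → (S → ℝ) → ℝ} {T : ℕ} {C₀ : ℝ}
    (hq0 : ∀ s x μ a y, IsProb μ → 0 ≤ q s x μ a y)
    (hq1 : ∀ s x μ a, IsProb μ → ∑ y, q s x μ a y = 1)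
    (hFb : ∀ s x μ a, IsProb μ → |F s x μ a| ≤ C₀)
    (hGb : ∀ x μ, IsProb μ → |G x μ| ≤ C₀)
    {N : ℕ} (hN : 0 < N) (t : ℕ) (xv : Fin N → S)
    (αv : Fin N → ℕ → S → (S → ℝ) → A) (i : Fin N) :
    |Ji q F G T t xv αv i| ≤ (1 + (T:ℝ)) * max C₀ 0 := by
  have hC' : C₀ ≤ max C₀ 0 := le_max_left _ _
  have hC0 : (0:ℝ) ≤ max C₀ 0 := le_max_right _ _
  have hJF := fun s => jointFlow_isProb hq0 hq1 hN αv t xv s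
  rw [Ji]
  refine (abs_add_le _ _).trans ?_
  have h1 : |∑ w : Fin N → S, jointFlow q αv t xv T w * G (w i) (emp w)| ≤ max C₀ 0 :=
    exp_abs_le _ _ (hJF T).1 (hJF T).2
      (fun w => (hGb (w i) (emp w) (isProb_emp hN w)).trans hC')
  have h2 : |∑ s ∈ Finset.Ico t T, ∑ w : Fin N → S, jointFlow q αv t xv s w *
        F s (w i) (emp w) (αv i s (w i) (emp w))| ≤ (T:ℝ) * max C₀ 0 := by
    refine (Finset.abs_sum_le_sum_abs _ _).trans ?_
    calc ∑ s ∈ Finset.Ico t T, |∑ w : Fin N → S, jointFlow q αv t xv s w *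
          F s (w i) (emp w) (αv i s (w i) (emp w))|
        ≤ ∑ _s ∈ Finset.Ico t T, max C₀ 0 := by
          refine Finset.sum_le_sum fun s _ => ?_
          exact exp_abs_le _ _ (hJF s).1 (hJF s).2
            (fun w => (hFb s (w i) (emp w) _ (isProb_emp hN w)).trans hC')
      _ = ((T - t:ℕ):ℝ) * max C₀ 0 := by rw [Finset.sum_const, Nat.card_Ico, nsmul_eq_mul]
      _ ≤ (T:ℝ) * max C₀ 0 := by
          refine mul_le_mul_of_nonneg_right ?_ hC0
          exact_mod_cast Nat.sub_le T t
  linarith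

lemma abs_sInf_diff {Aset Bset : Set ℝ} {ε : ℝ} (hε : 0 ≤ ε)
    (hAne : Aset.Nonempty) (hBne : Bset.Nonempty)
    (hAbd : BddBelow Aset) (hBbd : BddBelow Bset)
    (h1 : ∀ a ∈ Aset, ∃ b ∈ Bset, b ≤ a + ε) (h2 : ∀ b ∈ Bset, ∃ a ∈ Aset, a ≤ b + ε) :
    |sInf Aset - sInf Bset| ≤ ε := by
  rw [abs_le]
  constructor
  · have key : sInf Bset - ε ≤ sInf Aset := by
      refine le_csInf hAne fun a ha => ?_
      obtain ⟨b, hb, hle⟩ := h1 a ha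
      have := csInf_le hBbd hb
      linarith
    linarith
  · have key : sInf Aset - ε ≤ sInf Bset := by
      refine le_csInf hBne fun b hb => ?_
      obtain ⟨a, ha, hle⟩ := h2 b hb
      have := csInf_le hAbd ha
      linarith
    linarith

lemma v_diff {F : ℕ → S → (S → ℝ) → A → ℝ} {G : S → (S → ℝ) → ℝ} {ρ : ℝ → ℝ} {C₀ : ℝ}
    (hρmono : Monotone ρ) (hρnn : 0 ≤ ρ 0)
    (hq01 : ∀ s x μ a y, IsProb μ → 0 < q s x μ a y ∧ q s x μ a y < 1)
    (hq1 : ∀ s x μ a, IsProb μ → ∑ y, q s x μ a y = 1)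
    (hqLip : ∀ s x μ ν a b y, IsProb μ → IsProb ν →
      |q s x μ a y - q s x ν b y| ≤ Lq * (W1 μ ν + dist a b))
    (hFb : ∀ s x μ a, IsProb μ → |F s x μ a| ≤ C₀)
    (hGb : ∀ x μ, IsProb μ → |G x μ| ≤ C₀)
    (hFc : ∀ s x μ ν a b, IsProb μ → IsProb ν →
      |F s x μ a - F s x ν b| ≤ ρ (W1 μ ν + dist a b))
    (hGc : ∀ x μ ν, IsProb μ → IsProb ν → |G x μ - G x ν| ≤ ρ (W1 μ ν))
    {N : ℕ} (hN : 0 < N) {T t : ℕ} (htT : t ≤ T) (xv : Fin N → S) {μ : S → ℝ}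
    (hμ : IsProb μ) (α αt : ℕ → S → (S → ℝ) → A) (hα : LipCtrl L α) (hαt : LipCtrl L αt)
    (hL : 0 ≤ L) (i : Fin N) {θ δ : ℝ} (hδ : 0 < δ)
    (hθ1 : W1 (emp xv) μ ≤ θ) (hθ2 : 1 / Real.sqrt N ≤ θ) (hθ0 : 0 ≤ θ) :
    |vNi q F G T L t xv α i - valueM q F G T (flowM q α t μ) t (xv i)|
      ≤ ((T:ℝ)+1) * (ρ ((1+L)*δ)
          + (2 * max C₀ 0 / δ) * ((1 + (Fintype.card S : ℝ) * max Lq 0 * (1+L)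
              + ((Fintype.card S : ℝ)/2 + 2)) ^ T * θ)
          + max C₀ 0 * ((T:ℝ) * (((Fintype.card S : ℝ) * max Lq 0 * (1+L)) *
              ((1 + (Fintype.card S : ℝ) * max Lq 0 * (1+L)
                + ((Fintype.card S : ℝ)/2 + 2)) ^ T * θ)))) := by
  have hq0 : ∀ s x μ a y, IsProb μ → 0 ≤ q s x μ a y := fun s x μ a y h => (hq01 s x μ a y h).1.le
  set c1 : ℝ := (Fintype.card S : ℝ) * max Lq 0 * (1+L) with hc1
  have hc1nn : 0 ≤ c1 := by positivity
  set Dc : ℝ := (Fintype.card S : ℝ)/2 + 2 with hDc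
  set B : ℝ := 1 + c1 + Dc with hB
  set C₀' : ℝ := max C₀ 0 with hC₀'
  have hC₀'nn : 0 ≤ C₀' := le_max_right _ _
  set ν : ℕ → S → ℝ := flowM q α t μ with hν
  have hνP : ∀ r, IsProb (ν r) := flowM_isProb hq0 hq1 α t μ hμ
  have hρconst : 0 ≤ ρ ((1+L)*δ) := le_trans hρnn (hρmono (by positivity))
  have hB0 : (0:ℝ) ≤ B := by
    have h2 : (0:ℝ) ≤ Dc := by rw [hDc]; positivity
    rw [hB]; linarith
  set E : ℝ := ((T:ℝ)+1) * (ρ ((1+L)*δ) + (2 * C₀' / δ) * (B ^ T * θ)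
      + C₀' * ((T:ℝ) * (c1 * (B ^ T * θ)))) with hE
  have hE0 : 0 ≤ E := by
    rw [hE]
    have h1 : 0 ≤ (2 * C₀' / δ) * (B ^ T * θ) := by positivity
    have h2 : 0 ≤ C₀' * ((T:ℝ) * (c1 * (B ^ T * θ))) := by positivity
    have h3 : (0:ℝ) ≤ (T:ℝ)+1 := by positivity
    nlinarith
  set Aset : Set ℝ := { r : ℝ | ∃ αt' : ℕ → S → (S → ℝ) → A,
      r = costM q F G T ν t (xv i) αt' } with hAset
  set Bset : Set ℝ := { r : ℝ | ∃ αt' : ℕ → S → (S → ℝ) → A,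
      LipCtrl L αt' ∧ r = Ji q F G T t xv (replaceI α αt' i) i } with hBset
  have hAne : Aset.Nonempty := ⟨costM q F G T ν t (xv i) αt, αt, rfl⟩
  have hBne : Bset.Nonempty := ⟨Ji q F G T t xv (replaceI α αt i) i, αt, hαt, rfl⟩
  have hAbd : BddBelow Aset := by
    refine ⟨-((1 + (T:ℝ)) * C₀'), fun r hr => ?_⟩
    obtain ⟨αt', rfl⟩ := hr
    have := costM_bdd (T := T) hq0 hq1 hFb hGb hνP t (xv i) αt'
    rw [abs_le] at this
    exact this.1
  have hBbd : BddBelow Bset := by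
    refine ⟨-((1 + (T:ℝ)) * C₀'), fun r hr => ?_⟩
    obtain ⟨αt', _, rfl⟩ := hr
    have := Ji_bdd (T := T) hq0 hq1 hFb hGb hN t xv (replaceI α αt' i) i
    rw [abs_le] at this
    exact this.1
  have key : |sInf Bset - sInf Aset| ≤ E := by
    refine abs_sInf_diff hE0 hBne hAne hBbd hAbd ?_ ?_
    · -- from Bset to Aset within E
      intro b hb
      obtain ⟨αt', hLip', rfl⟩ := hb
      refine ⟨costM q F G T ν t (xv i) αt', ⟨αt', rfl⟩, ?_⟩
      have := J_diff hρmono hρnn hq01 hq1 hqLip hFb hGb hFc hGc hN htT xv hμ α αt'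
        hα hLip' hL i hδ hθ1 hθ2 hθ0
      rw [← hc1, ← hDc, ← hB, ← hC₀', ← hE] at this
      rw [abs_le] at this
      have h2 := this.2
      linarith [h2]
    · -- from Aset to Bset within E
      intro a ha
      obtain ⟨αt', rfl⟩ := ha
      set αbar : ℕ → S → (S → ℝ) → A := fun s x _ => αt' s x (ν s) with hαbar
      have hLipBar : LipCtrl L αbar := by
        intro s x μ' ν'
        rw [hαbar]
        simp only [dist_self]
        have := W1_nonneg μ' ν'
        positivity
      refine ⟨Ji q F G T t xv (replaceI α αbar i) i, ⟨αbar, hLipBar, rfl⟩, ?_⟩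
      have hcost : costM q F G T ν t (xv i) αbar = costM q F G T ν t (xv i) αt' :=
        costM_ctrl_eq ν αbar αt' t (xv i) (fun s x => rfl)
      have := J_diff hρmono hρnn hq01 hq1 hqLip hFb hGb hFc hGc hN htT xv hμ α αbar
        hα hLipBar hL i hδ hθ1 hθ2 hθ0
      rw [← hc1, ← hDc, ← hB, ← hC₀', ← hE] at this
      rw [abs_le] at this
      have h1 := this.1
      rw [hcost] at h1
      linarith [h1]
  have hv : vNi q F G T L t xv α i = sInf Bset := rfl
  have hval : valueM q F G T ν t (xv i) = sInf Aset := rfl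
  rw [hv, hval]
  exact key

end Main2
end MFGAux

/-- Theorem 3.4, convergence of the cost functions.  Assume `q` is
uniformly Lipschitz in `(μ,a)` with constant `L_q` and `F, G` are bounded by `C₀` and
uniformly continuous in `(μ,a)` with modulus `ρ`.  For any `L ≥ 0` there is a modulus
of continuity `ρ_L` (depending only on `T, |𝕊|, L_q, C₀, ρ, L`) such that
`|J_i(t,x⃗,(α,α̃)_i) − J(t,μ,α;x_i,α̃)| + |v^{N,L}_i(t,x⃗,α) − v(μ^α;t,x_i)| ≤ ρ_L(θ_N)`,
where `θ_N = W₁(μ^N_{x⃗},μ) + 1/√N`. -/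
theorem cost_convergence
    {S A : Type*} [Fintype S] [DecidableEq S] [PseudoMetricSpace A]
    (T : ℕ) (Lq C₀ : ℝ) (ρ : ℝ → ℝ)
    (hρmono : Monotone ρ)
    (hρ0 : Filter.Tendsto ρ (nhdsWithin 0 (Set.Ioi 0)) (nhds 0))
    (L : ℝ) (hL : 0 ≤ L) :
    ∃ ρL : ℝ → ℝ, Monotone ρL ∧
      Filter.Tendsto ρL (nhdsWithin 0 (Set.Ioi 0)) (nhds 0) ∧
      ∀ (q : ℕ → S → (S → ℝ) → A → S → ℝ)
        (F : ℕ → S → (S → ℝ) → A → ℝ) (G : S → (S → ℝ) → ℝ),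
        (∀ s x μ a y, IsProb μ → 0 < q s x μ a y ∧ q s x μ a y < 1) →
        (∀ s x μ a, IsProb μ → ∑ y, q s x μ a y = 1) →
        (∀ s x μ ν a b y, IsProb μ → IsProb ν →
          |q s x μ a y - q s x ν b y| ≤ Lq * (W1 μ ν + dist a b)) →
        (∀ s x μ a, IsProb μ → |F s x μ a| ≤ C₀) →
        (∀ x μ, IsProb μ → |G x μ| ≤ C₀) →
        (∀ s x μ ν a b, IsProb μ → IsProb ν →
          |F s x μ a - F s x ν b| ≤ ρ (W1 μ ν + dist a b)) →
        (∀ x μ ν, IsProb μ → IsProb ν → |G x μ - G x ν| ≤ ρ (W1 μ ν)) →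
        ∀ (N : ℕ), 0 < N →
        ∀ (t : ℕ), t ≤ T →
        ∀ (xv : Fin N → S), (∀ x, 0 < emp xv x) →
        ∀ (μ : S → ℝ), IsProb μ → (∀ x, 0 < μ x) →
        ∀ (α αt : ℕ → S → (S → ℝ) → A), LipCtrl L α → LipCtrl L αt →
        ∀ (i : Fin N),
          |Ji q F G T t xv (replaceI α αt i) i - costM q F G T (flowM q α t μ) t (xv i) αt| +
            |vNi q F G T L t xv α i - valueM q F G T (flowM q α t μ) t (xv i)|
            ≤ ρL (W1 (emp xv) μ + 1 / Real.sqrt N) := by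
  classical
  set c1 : ℝ := (Fintype.card S : ℝ) * max Lq 0 * (1+L) with hc1
  have hc1nn : 0 ≤ c1 := by positivity
  set Dc : ℝ := (Fintype.card S : ℝ)/2 + 2 with hDc
  have hDc0 : (0:ℝ) ≤ Dc := by rw [hDc]; positivity
  set B : ℝ := 1 + c1 + Dc with hB
  have hB0 : (0:ℝ) ≤ B := by rw [hB]; linarith
  set CT : ℝ := B ^ T with hCT
  have hCT0 : 0 ≤ CT := pow_nonneg hB0 T
  set C₀' : ℝ := max C₀ 0 with hC₀'
  have hC₀'nn : 0 ≤ C₀' := le_max_right _ _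
  refine ⟨fun θ => 2*((T:ℝ)+1) * (ρ ((1+L) * Real.sqrt θ)
    + 2 * C₀' * (CT * Real.sqrt θ) + C₀' * ((T:ℝ) * (c1 * (CT * max θ 0)))), ?_, ?_, ?_⟩
  · -- monotone
    intro a b hab
    have h1 : Real.sqrt a ≤ Real.sqrt b := Real.sqrt_le_sqrt hab
    have hsa : 0 ≤ Real.sqrt a := Real.sqrt_nonneg a
    have h2 : max a 0 ≤ max b 0 := max_le_max hab le_rfl
    have hρ' : ρ ((1+L) * Real.sqrt a) ≤ ρ ((1+L) * Real.sqrt b) :=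
      hρmono (by nlinarith)
    refine mul_le_mul_of_nonneg_left ?_ (by positivity)
    refine add_le_add (add_le_add hρ' ?_) ?_
    · exact mul_le_mul_of_nonneg_left (mul_le_mul_of_nonneg_left h1 hCT0) (by positivity)
    · refine mul_le_mul_of_nonneg_left ?_ hC₀'nn
      refine mul_le_mul_of_nonneg_left ?_ (by positivity)
      exact mul_le_mul_of_nonneg_left (mul_le_mul_of_nonneg_left h2 hCT0) hc1nn
  · -- tendsto 0 along 0+
    have hg : Filter.Tendsto (fun θ : ℝ => (1+L) * Real.sqrt θ)
        (nhdsWithin 0 (Set.Ioi 0)) (nhdsWithin 0 (Set.Ioi 0)) := by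
      rw [tendsto_nhdsWithin_iff]
      constructor
      · have hs : Filter.Tendsto (fun θ : ℝ => Real.sqrt θ) (nhds 0) (nhds 0) := by
          simpa using Real.continuous_sqrt.tendsto 0
        have := hs.const_mul (1+L)
        rw [mul_zero] at this
        exact this.mono_left nhdsWithin_le_nhds
      · filter_upwards [self_mem_nhdsWithin] with θ hθ
        have : (0:ℝ) < θ := hθ
        have hsq : 0 < Real.sqrt θ := Real.sqrt_pos.mpr this
        exact mul_pos (by linarith) hsq
    have hf1 : Filter.Tendsto (fun θ : ℝ => ρ ((1+L) * Real.sqrt θ))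
        (nhdsWithin 0 (Set.Ioi 0)) (nhds 0) := hρ0.comp hg
    have hf2 : Filter.Tendsto (fun θ : ℝ => 2 * C₀' * (CT * Real.sqrt θ))
        (nhdsWithin 0 (Set.Ioi 0)) (nhds 0) := by
      have hs : Filter.Tendsto (fun θ : ℝ => Real.sqrt θ) (nhds 0) (nhds 0) := by
        simpa using Real.continuous_sqrt.tendsto 0
      have := (hs.const_mul CT).const_mul (2 * C₀')
      simp only [mul_zero] at this
      exact this.mono_left nhdsWithin_le_nhds
    have hf3 : Filter.Tendsto (fun θ : ℝ => C₀' * ((T:ℝ) * (c1 * (CT * max θ 0))))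
        (nhdsWithin 0 (Set.Ioi 0)) (nhds 0) := by
      have hmax : Filter.Tendsto (fun θ : ℝ => max θ 0) (nhds 0) (nhds 0) := by
        have : Continuous (fun θ : ℝ => max θ 0) := continuous_id.max continuous_const
        simpa using this.tendsto 0
      have := ((hmax.const_mul CT).const_mul c1).const_mul (T:ℝ)
      have := this.const_mul C₀'
      simp only [mul_zero] at this
      exact this.mono_left nhdsWithin_le_nhds
    have := ((hf1.add hf2).add hf3).const_mul (2*((T:ℝ)+1))
    simp only [add_zero, mul_zero] at this
    convert this using 2
  · -- the main estimate
    intro q F G hq01 hq1 hqLip hFb hGb hFc hGc N hN t htT xv hxv μ hμ hμpos α αt hα hαt i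
    set θN : ℝ := W1 (emp xv) μ + 1 / Real.sqrt N with hθN
    have hsN : 0 < Real.sqrt N := MFGAux.sqrt_N_pos hN
    have hW0 : 0 ≤ W1 (emp xv) μ := MFGAux.W1_nonneg _ _
    have hθpos : 0 < θN := by rw [hθN]; positivity
    have hθ0 : 0 ≤ θN := hθpos.le
    set δ : ℝ := Real.sqrt θN with hδdef
    have hδ : 0 < δ := Real.sqrt_pos.mpr hθpos
    have hθ1 : W1 (emp xv) μ ≤ θN := by
      have h : (0:ℝ) < 1 / Real.sqrt N := by positivity
      rw [hθN]; linarith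
    have hθ2 : 1 / Real.sqrt N ≤ θN := by rw [hθN]; linarith
    have hρnn : 0 ≤ ρ 0 := by
      have hW1self : W1 μ μ = 0 := by simp [W1]
      have h0 := hFc 0 (xv i) μ μ (αt 0 (xv i) μ) (αt 0 (xv i) μ) hμ hμ
      rw [sub_self, abs_zero, hW1self, dist_self, add_zero] at h0
      exact h0
    have hJ := MFGAux.J_diff (Lq := Lq) (L := L) hρmono hρnn hq01 hq1 hqLip hFb hGb hFc hGc
      hN htT xv hμ α αt hα hαt hL i hδ hθ1 hθ2 hθ0
    have hV := MFGAux.v_diff (Lq := Lq) (L := L) hρmono hρnn hq01 hq1 hqLip hFb hGb hFc hGc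
      hN htT xv hμ α αt hα hαt hL i hδ hθ1 hθ2 hθ0
    rw [← hc1, ← hDc, ← hB, ← hCT, ← hC₀'] at hJ hV
    have hmax : max θN 0 = θN := max_eq_left hθ0
    have hθδ : θN = δ * δ := (Real.mul_self_sqrt hθ0).symm
    have hfold : 2*((T:ℝ)+1) * (ρ ((1+L) * δ)
          + 2 * C₀' * (CT * δ) + C₀' * ((T:ℝ) * (c1 * (CT * max θN 0))))
        = ((T:ℝ)+1) * (ρ ((1+L)*δ) + (2 * C₀' / δ) * (CT * θN)
            + C₀' * ((T:ℝ) * (c1 * (CT * θN))))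
          + ((T:ℝ)+1) * (ρ ((1+L)*δ) + (2 * C₀' / δ) * (CT * θN)
            + C₀' * ((T:ℝ) * (c1 * (CT * θN)))) := by
      rw [hmax]
      have hmid : (2 * C₀' / δ) * (CT * θN) = 2 * C₀' * (CT * δ) := by
        rw [hθδ]
        field_simp
      rw [hmid]
      ring
    calc |Ji q F G T t xv (replaceI α αt i) i
            - costM q F G T (flowM q α t μ) t (xv i) αt|
          + |vNi q F G T L t xv α i - valueM q F G T (flowM q α t μ) t (xv i)|
        ≤ ((T:ℝ)+1) * (ρ ((1+L)*δ) + (2 * C₀' / δ) * (CT * θN)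
            + C₀' * ((T:ℝ) * (c1 * (CT * θN))))
          + ((T:ℝ)+1) * (ρ ((1+L)*δ) + (2 * C₀' / δ) * (CT * θN)
            + C₀' * ((T:ℝ) * (c1 * (CT * θN)))) := add_le_add hJ hV
      _ = 2*((T:ℝ)+1) * (ρ ((1+L) * δ)
            + 2 * C₀' * (CT * δ) + C₀' * ((T:ℝ) * (c1 * (CT * max θN 0)))) := hfold.symm
      _ = _ := rfl
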